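/- arXiv:1605.00901 — 5 statements merged into one kernel-verified Lean document; each statement's English description precedes it below -/
import Mathlib

section
/- A multiset A = {a1,...,at} of positive integers admits a partition into two parts with equal sums if and only if the following scheduling instance on two identical machines has a schedule with makespan T = (2t+3)·b, where b = (Σ a_i)/2: three chains of jobs J0 = (j0_1 ≺ ... ≺ j0_t) with processing times a_1,...,a_t, and J1, J2 each consisting of t+1 jobs of processing time 2b, scheduled non-preemptively on two machines respecting the chain precedence constraints. -/
open Finset


def pSum {t : ℕ} (a : Fin t → ℕ) (A : Finset (Fin t)) (n : ℕ) : ℕ :=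
  ∑ i ∈ A.filter (fun i : Fin t => (i : ℕ) < n), a i

lemma pSum_mono {t : ℕ} (a : Fin t → ℕ) (A : Finset (Fin t)) {n m : ℕ} (h : n ≤ m) :
    pSum a A n ≤ pSum a A m := by
  apply Finset.sum_le_sum_of_subset
  intro i hi
  simp only [Finset.mem_filter] at *
  exact ⟨hi.1, by omega⟩

lemma pSum_le {t : ℕ} (a : Fin t → ℕ) (A : Finset (Fin t)) (n : ℕ) :
    pSum a A n ≤ ∑ i ∈ A, a i :=
  Finset.sum_le_sum_of_subset (Finset.filter_subset _ _)

lemma pSum_top {t : ℕ} (a : Fin t → ℕ) (A : Finset (Fin t)) :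
    pSum a A t = ∑ i ∈ A, a i := by
  unfold pSum
  congr 1
  apply Finset.filter_true_of_mem
  intro i _; exact i.isLt

lemma pSum_succ_mem {t : ℕ} (a : Fin t → ℕ) (A : Finset (Fin t)) {n : ℕ} (hn : n < t)
    (hmem : (⟨n, hn⟩ : Fin t) ∈ A) :
    pSum a A n + a ⟨n, hn⟩ ≤ pSum a A (n + 1) := by
  unfold pSum
  have : A.filter (fun i : Fin t => (i : ℕ) < n + 1) =
      insert (⟨n, hn⟩ : Fin t) (A.filter (fun i : Fin t => (i : ℕ) < n)) := by
    ext i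
    simp only [Finset.mem_filter, Finset.mem_insert]
    constructor
    · rintro ⟨hiA, hi⟩
      rcases Nat.lt_or_ge (i : ℕ) n with h | h
      · exact Or.inr ⟨hiA, h⟩
      · left; apply Fin.ext; simp; omega
    · rintro (rfl | ⟨hiA, hi⟩)
      · exact ⟨hmem, by simp⟩
      · exact ⟨hiA, by omega⟩
  rw [this, Finset.sum_insert (by simp)]
  omega

lemma pSum_succ_mem' {t : ℕ} (a : Fin t → ℕ) (A : Finset (Fin t)) (i : Fin t)
    (hmem : i ∈ A) : pSum a A (i : ℕ) + a i ≤ pSum a A ((i : ℕ) + 1) :=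
  pSum_succ_mem a A i.isLt hmem

lemma chainLe (u : ℕ → ℕ) (d n : ℕ) (h : ∀ k, k < n → u k + d ≤ u (k + 1)) :
    ∀ j m, j + m ≤ n → u j + d * m ≤ u (j + m) := by
  intro j m
  induction m with
  | zero => simp
  | succ m ih =>
    intro hm
    have h1 := ih (by omega)
    have h2 := h (j + m) (by omega)
    have h3 : u j + d * (m + 1) = u j + d * m + d := by ring
    have h4 : j + (m + 1) = (j + m) + 1 := by omega
    rw [h3, h4]
    omega

section
variable (t b : ℕ)


lemma slot_lemma (t b : ℕ) (hb1 : 1 ≤ b) (a : Fin t → ℕ) (ha : ∀ i, 1 ≤ a i)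
    (σ : Fin t → ℕ)
    (hσm : ∀ i j : Fin t, (i : ℕ) < (j : ℕ) → σ i + a i ≤ σ j)
    (k x1 y1 x2 y2 : ℕ)
    (hx1 : 2*b*k ≤ x1) (hy1 : y1 ≤ 2*b*k + b)
    (hx2 : 2*b*k ≤ x2) (hy2 : y2 ≤ 2*b*k + b)
    (hxy1 : x1 ≤ y1) (hxy2 : x2 ≤ y2)
    (hdisj : ∀ τ, x1 ≤ τ → τ < y1 → x2 ≤ τ → τ < y2 → False)
    (hcov1 : ∀ τ, x1 ≤ τ → τ < y1 → ∃ i : Fin t, σ i ≤ τ ∧ τ < σ i + a i)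
    (hcov2 : ∀ τ, x2 ≤ τ → τ < y2 → ∃ i : Fin t, σ i ≤ τ ∧ τ < σ i + a i)
    (hjob : ∀ (i : Fin t) (τ : ℕ), σ i ≤ τ → τ < σ i + a i → 2*b*k ≤ τ → τ < 2*b*k + b →
      (x1 ≤ τ ∧ τ < y1) ∨ (x2 ≤ τ ∧ τ < y2))
    (hmem : ∀ (i : Fin t) (τ : ℕ), σ i ≤ τ → τ < σ i + a i → 2*b*k ≤ τ → τ < 2*b*k + b →
      2*b*k ≤ σ i ∧ σ i + a i ≤ 2*b*k + b) :
    (∃ C1 ⊆ Finset.univ.filter (fun i : Fin t => 2*b*k ≤ σ i ∧ σ i + a i ≤ 2*b*k + b),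
       (∑ i ∈ C1, a i) + x1 = y1 ∧
       (∑ i ∈ (Finset.univ.filter
          (fun i : Fin t => 2*b*k ≤ σ i ∧ σ i + a i ≤ 2*b*k + b)) \ C1, a i) + x2 = y2) ∨
    (y1 = x2 ∧ (∑ i ∈ Finset.univ.filter
          (fun i : Fin t => 2*b*k ≤ σ i ∧ σ i + a i ≤ 2*b*k + b), a i) + x1 + x2 = y1 + y2) ∨
    (y2 = x1 ∧ (∑ i ∈ Finset.univ.filter
          (fun i : Fin t => 2*b*k ≤ σ i ∧ σ i + a i ≤ 2*b*k + b), a i) + x1 + x2 = y1 + y2) := by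
  classical
  set C := Finset.univ.filter (fun i : Fin t => 2*b*k ≤ σ i ∧ σ i + a i ≤ 2*b*k + b) with hCdef
  have hCmem : ∀ i : Fin t, i ∈ C ↔ (2*b*k ≤ σ i ∧ σ i + a i ≤ 2*b*k + b) := by
    intro i; simp [hCdef]
  -- pairwise disjoint job intervals
  have hpair : ∀ i ∈ C, ∀ j ∈ C, i ≠ j →
      Disjoint (Finset.Ico (σ i) (σ i + a i)) (Finset.Ico (σ j) (σ j + a j)) := by
    intro i _ j _ hij
    rw [Finset.disjoint_left]
    intro τ hτi hτj
    rw [Finset.mem_Ico] at hτi hτj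
    have hvij : (i : ℕ) ≠ (j : ℕ) := fun hc => hij (Fin.ext hc)
    rcases Nat.lt_or_ge (i : ℕ) (j : ℕ) with h | h
    · have := hσm i j h; omega
    · have := hσm j i (by omega); omega
  -- the union of job intervals is exactly I1 ∪ I2
  have hBU : C.biUnion (fun i => Finset.Ico (σ i) (σ i + a i)) =
      Finset.Ico x1 y1 ∪ Finset.Ico x2 y2 := by
    ext τ
    simp only [Finset.mem_biUnion, Finset.mem_union, Finset.mem_Ico, hCmem]
    constructor
    · rintro ⟨i, ⟨hs, he⟩, h1, h2⟩
      exact hjob i τ h1 h2 (by omega) (by omega)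
    · rintro (⟨h1, h2⟩ | ⟨h1, h2⟩)
      · obtain ⟨i, hi1, hi2⟩ := hcov1 τ h1 h2
        exact ⟨i, hmem i τ hi1 hi2 (by omega) (by omega), hi1, hi2⟩
      · obtain ⟨i, hi1, hi2⟩ := hcov2 τ h1 h2
        exact ⟨i, hmem i τ hi1 hi2 (by omega) (by omega), hi1, hi2⟩
  have hcard1 : (C.biUnion (fun i => Finset.Ico (σ i) (σ i + a i))).card = ∑ i ∈ C, a i := by
    rw [Finset.card_biUnion hpair]
    apply Finset.sum_congr rfl
    intro i _
    rw [Nat.card_Ico]; omega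
  have hcard2 : (Finset.Ico x1 y1 ∪ Finset.Ico x2 y2).card = (y1 - x1) + (y2 - x2) := by
    rw [Finset.card_union_of_disjoint, Nat.card_Ico, Nat.card_Ico]
    rw [Finset.disjoint_left]
    intro τ hτ1 hτ2
    rw [Finset.mem_Ico] at hτ1 hτ2
    exact hdisj τ hτ1.1 hτ1.2 hτ2.1 hτ2.2
  have hCnt : (∑ i ∈ C, a i) + x1 + x2 = y1 + y2 := by
    have := hBU ▸ hcard1
    omega
  -- dichotomy
  by_cases hmix : ∃ i ∈ C,
      (∃ τ, x1 ≤ τ ∧ τ < y1 ∧ σ i ≤ τ ∧ τ < σ i + a i) ∧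
      (∃ τ, x2 ≤ τ ∧ τ < y2 ∧ σ i ≤ τ ∧ τ < σ i + a i)
  · -- a mixed job exists: the two idle intervals are adjacent
    obtain ⟨i, hiC, ⟨τ1, h11, h12, h13, h14⟩, ⟨τ2, h21, h22, h23, h24⟩⟩ := hmix
    have hτne : τ1 ≠ τ2 := by
      intro hc; subst hc; exact hdisj τ1 h11 h12 h21 h22
    have hCS := (hCmem i).mp hiC
    rcases Nat.lt_or_ge τ1 τ2 with hlt | hge
    · -- τ1 < τ2 : y1 = x2
      have hn2 : ¬ (y2 ≤ x1) := by omega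
      have hley : y1 ≤ x2 := by
        by_contra hcon
        push_neg at hcon
        rcases Nat.le_total x1 x2 with hx | hx
        · exact hdisj x2 hx hcon le_rfl (by omega)
        · exact hdisj x1 le_rfl (by omega) hx (by omega)
      have : ¬ (y1 < x2) := by
        intro hcon
        have hy1job : σ i ≤ y1 ∧ y1 < σ i + a i := by omega
        have := hjob i y1 hy1job.1 hy1job.2 (by omega) (by omega)
        omega
      right; left
      exact ⟨by omega, hCnt⟩
    · -- τ2 < τ1 : y2 = x1
      have hτlt : τ2 < τ1 := by omega
      have hn2 : ¬ (y1 ≤ x2) := by omega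
      have hley : y2 ≤ x1 := by
        by_contra hcon
        push_neg at hcon
        rcases Nat.le_total x1 x2 with hx | hx
        · exact hdisj x2 hx (by omega) le_rfl (by omega)
        · exact hdisj x1 le_rfl (by omega) hx hcon
      have : ¬ (y2 < x1) := by
        intro hcon
        have hy2job : σ i ≤ y2 ∧ y2 < σ i + a i := by omega
        have := hjob i y2 hy2job.1 hy2job.2 (by omega) (by omega)
        omega
      right; right
      exact ⟨by omega, hCnt⟩
  · -- no mixed job
    -- every job in C lies inside I1 or inside I2
    have hsplit : ∀ i ∈ C, (x1 ≤ σ i ∧ σ i + a i ≤ y1) ∨ (x2 ≤ σ i ∧ σ i + a i ≤ y2) := by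
      intro i hiC
      have hCS := (hCmem i).mp hiC
      have hai := ha i
      have hfirst := hjob i (σ i) le_rfl (by omega) (by omega) (by omega)
      rcases hfirst with ⟨hf1, hf2⟩ | ⟨hf1, hf2⟩
      · -- starts in I1
        left
        refine ⟨hf1, ?_⟩
        by_contra hcon
        push_neg at hcon
        have hlast := hjob i (σ i + a i - 1) (by omega) (by omega) (by omega) (by omega)
        rcases hlast with ⟨hl1, hl2⟩ | ⟨hl1, hl2⟩
        · -- last point also in I1 : contradiction with end > y1
          omega
        · -- job meets both: contradiction with no-mix
          exact absurd ⟨i, hiC, ⟨σ i, hf1, hf2, le_rfl, by omega⟩,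
            ⟨σ i + a i - 1, hl1, hl2, by omega, by omega⟩⟩ hmix
      · right
        refine ⟨hf1, ?_⟩
        by_contra hcon
        push_neg at hcon
        have hlast := hjob i (σ i + a i - 1) (by omega) (by omega) (by omega) (by omega)
        rcases hlast with ⟨hl1, hl2⟩ | ⟨hl1, hl2⟩
        · exact absurd ⟨i, hiC, ⟨σ i + a i - 1, hl1, hl2, by omega, by omega⟩,
            ⟨σ i, hf1, hf2, le_rfl, by omega⟩⟩ hmix
        · omega
    set C1 := C.filter (fun i : Fin t => x1 ≤ σ i ∧ σ i + a i ≤ y1) with hC1def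
    have hC1sub : C1 ⊆ C := Finset.filter_subset _ _
    have hBU1 : C1.biUnion (fun i => Finset.Ico (σ i) (σ i + a i)) = Finset.Ico x1 y1 := by
      ext τ
      simp only [Finset.mem_biUnion, Finset.mem_Ico, hC1def, Finset.mem_filter]
      constructor
      · rintro ⟨i, ⟨hiC, hi1, hi2⟩, h1, h2⟩
        omega
      · rintro ⟨h1, h2⟩
        obtain ⟨i, hi1, hi2⟩ := hcov1 τ h1 h2
        have hCS := hmem i τ hi1 hi2 (by omega) (by omega)
        have hiC : i ∈ C := (hCmem i).mpr hCS
        rcases hsplit i hiC with ⟨hs1, hs2⟩ | ⟨hs1, hs2⟩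
        · exact ⟨i, ⟨hiC, hs1, hs2⟩, hi1, hi2⟩
        · exact (hdisj τ h1 h2 (by omega) (by omega)).elim
    have hpair1 : ∀ i ∈ C1, ∀ j ∈ C1, i ≠ j →
        Disjoint (Finset.Ico (σ i) (σ i + a i)) (Finset.Ico (σ j) (σ j + a j)) :=
      fun i hi j hj => hpair i (hC1sub hi) j (hC1sub hj)
    have hcardC1 : ∑ i ∈ C1, a i = y1 - x1 := by
      have h1 : (C1.biUnion (fun i => Finset.Ico (σ i) (σ i + a i))).card = ∑ i ∈ C1, a i := by
        rw [Finset.card_biUnion hpair1]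
        apply Finset.sum_congr rfl
        intro i _
        rw [Nat.card_Ico]; omega
      rw [hBU1, Nat.card_Ico] at h1
      omega
    have hsdiff : ∑ i ∈ C \ C1, a i + ∑ i ∈ C1, a i = ∑ i ∈ C, a i :=
      Finset.sum_sdiff hC1sub
    left
    exact ⟨C1, hC1sub, by omega, by omega⟩

section
variable (t b : ℕ)

lemma core (hb1 : 1 ≤ b) (a : Fin t → ℕ) (ha : ∀ i, 1 ≤ a i)
    (σ : Fin t → ℕ) (u v : ℕ → ℕ)
    (hσm : ∀ i j : Fin t, (i : ℕ) < (j : ℕ) → σ i + a i ≤ σ j)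
    (hend0 : ∀ i : Fin t, σ i + a i ≤ (2*t+3)*b)
    (hu_step : ∀ k, k ≤ t → u k + 2*b ≤ u (k+1)) (hu_T : u (t+1) = (2*t+3)*b)
    (hv_step : ∀ k, k ≤ t → v k + 2*b ≤ v (k+1)) (hv_T : v (t+1) = (2*t+3)*b)
    (H1 : ∀ τ, τ < (2*t+3)*b → (∀ k, k ≤ t → ¬(u k ≤ τ ∧ τ < u k + 2*b)) →
      (∃ i : Fin t, σ i ≤ τ ∧ τ < σ i + a i) ∧ (∃ k, k ≤ t ∧ v k ≤ τ ∧ τ < v k + 2*b))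
    (H2 : ∀ τ, τ < (2*t+3)*b → (∀ k, k ≤ t → ¬(v k ≤ τ ∧ τ < v k + 2*b)) →
      (∃ i : Fin t, σ i ≤ τ ∧ τ < σ i + a i) ∧ (∃ k, k ≤ t ∧ u k ≤ τ ∧ τ < u k + 2*b))
    (H3 : ∀ τ, τ < (2*t+3)*b → ∀ i : Fin t, σ i ≤ τ → τ < σ i + a i →
      (∀ k, k ≤ t → ¬(u k ≤ τ ∧ τ < u k + 2*b)) ∨ (∀ k, k ≤ t → ¬(v k ≤ τ ∧ τ < v k + 2*b))) :
    ∃ A : Finset (Fin t), ∑ i ∈ A, a i = b := by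
  classical
  -- monotonicity and slot bounds for the big chains
  have bounds : ∀ w : ℕ → ℕ, (∀ k, k ≤ t → w k + 2*b ≤ w (k+1)) → (w (t+1) = (2*t+3)*b) →
      (∀ j k, j ≤ k → k ≤ t+1 → w j ≤ w k) ∧ (∀ k, k ≤ t+1 → 2*b*k ≤ w k) ∧
      (∀ k, k ≤ t+1 → w k ≤ 2*b*k + b) := by
    intro w hstep hT
    have hm := chainLe w (2*b) (t+1) (fun k hk => hstep k (by omega))
    refine ⟨?_, ?_, ?_⟩
    · intro j k hjk hk
      have h := hm j (k - j) (by omega)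
      rw [show j + (k - j) = k by omega] at h
      omega
    · intro k hk
      have h := hm 0 k (by omega)
      rw [Nat.zero_add] at h
      omega
    · intro k hk
      have h := hm k (t+1-k) (by omega)
      rw [show k + (t+1-k) = t+1 by omega, hT] at h
      have e1 : 2*b*k + 2*b*(t+1-k) = 2*b*(t+1) := by
        rw [← Nat.left_distrib]; congr 1; omega
      have e2 : (2*t+3)*b = 2*b*(t+1) + b := by ring
      omega
  obtain ⟨hu_le, hu1, hu2⟩ := bounds u hu_step hu_T
  obtain ⟨hv_le, hv1, hv2⟩ := bounds v hv_step hv_T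
  have mulstep : ∀ k k' : ℕ, k < k' → 2*b*k + 2*b ≤ 2*b*k' := by
    intro k k' h
    have h2 : 2*b*(k+1) ≤ 2*b*k' := Nat.mul_le_mul_left _ (by omega)
    have h3 : 2*b*(k+1) = 2*b*k + 2*b := by ring
    omega
  have slotUniq : ∀ k k' τ : ℕ, 2*b*k ≤ τ → τ < 2*b*k + b → 2*b*k' ≤ τ → τ < 2*b*k' + b →
      k = k' := by
    intro k k' τ h1 h2 h3 h4
    rcases Nat.lt_trichotomy k k' with h | h | h
    · have := mulstep k k' h; omega
    · exact h
    · have := mulstep k' k h; omega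
  have slotT : ∀ k, k ≤ t+1 → 2*b*k + b ≤ (2*t+3)*b := by
    intro k hk
    have h1 : 2*b*k ≤ 2*b*(t+1) := Nat.mul_le_mul_left _ (by omega)
    have h2 : (2*t+3)*b = 2*b*(t+1) + b := by ring
    omega
  -- idle interval characterization
  have idleb : ∀ w : ℕ → ℕ, w (t+1) = (2*t+3)*b →
      ∀ τ, τ < (2*t+3)*b → (∀ k', k' ≤ t → ¬(w k' ≤ τ ∧ τ < w k' + 2*b)) →
      ∃ k, k ≤ t+1 ∧ τ < w k ∧ (k = 0 ∨ ∃ k', k = k'+1 ∧ w k' + 2*b ≤ τ) := by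
    intro w hT τ hτ hidle
    have hex : ∃ k, τ < w k := ⟨t+1, by rw [hT]; exact hτ⟩
    have hspec : τ < w (Nat.find hex) := Nat.find_spec hex
    have hle : Nat.find hex ≤ t+1 := Nat.find_le (by rw [hT]; exact hτ)
    rcases Nat.eq_zero_or_pos (Nat.find hex) with h0 | hpos
    · exact ⟨0, by omega, by rw [← h0]; exact hspec, Or.inl rfl⟩
    · have hmin : ¬ τ < w (Nat.find hex - 1) := Nat.find_min hex (by omega)
      have hge : w (Nat.find hex - 1) + 2*b ≤ τ := by
        have := hidle (Nat.find hex - 1) (by omega)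
        omega
      exact ⟨Nat.find hex, hle, hspec, Or.inr ⟨Nat.find hex - 1, by omega, hge⟩⟩
  have idlea : ∀ w : ℕ → ℕ, (∀ j k, j ≤ k → k ≤ t+1 → w j ≤ w k) →
      ∀ τ k, k ≤ t+1 → τ < w k → (k = 0 ∨ ∃ k', k = k'+1 ∧ w k' + 2*b ≤ τ) →
      ∀ k', k' ≤ t → ¬(w k' ≤ τ ∧ τ < w k' + 2*b) := by
    intro w hwle τ k hk hlt hg k' hk' hband
    rcases Nat.lt_or_ge k' k with h | h
    · rcases hg with rfl | ⟨k'', rfl, hg2⟩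
      · omega
      · have := hwle k' k'' (by omega) (by omega)
        omega
    · have := hwle k k' h (by omega)
      omega
  -- every point of an a-job lies in an idle interval of one of the chains
  have hpt : ∀ (i : Fin t) (τ : ℕ), σ i ≤ τ → τ < σ i + a i → τ < (2*t+3)*b →
      ∃ k, k ≤ t+1 ∧ 2*b*k ≤ τ ∧ τ < 2*b*k + b ∧
        ((τ < u k ∧ (k = 0 ∨ ∃ k', k = k'+1 ∧ u k' + 2*b ≤ τ)) ∨
         (τ < v k ∧ (k = 0 ∨ ∃ k', k = k'+1 ∧ v k' + 2*b ≤ τ))) := by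
    intro i τ h1 h2 hτ
    rcases H3 τ hτ i h1 h2 with hid | hid
    · obtain ⟨k, hk, hlt, hg⟩ := idleb u hu_T τ hτ hid
      refine ⟨k, hk, ?_, ?_, Or.inl ⟨hlt, hg⟩⟩
      · rcases hg with rfl | ⟨k', rfl, hg2⟩
        · omega
        · have h3 := hu1 k' (by omega)
          have h4 : 2*b*(k'+1) = 2*b*k' + 2*b := by ring
          omega
      · have := hu2 k hk; omega
    · obtain ⟨k, hk, hlt, hg⟩ := idleb v hv_T τ hτ hid
      refine ⟨k, hk, ?_, ?_, Or.inr ⟨hlt, hg⟩⟩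
      · rcases hg with rfl | ⟨k', rfl, hg2⟩
        · omega
        · have h3 := hv1 k' (by omega)
          have h4 : 2*b*(k'+1) = 2*b*k' + 2*b := by ring
          omega
      · have := hv2 k hk; omega
  -- every a-job lies inside a single slot
  have hS : ∀ i : Fin t, ∃ k, k ≤ t+1 ∧ 2*b*k ≤ σ i ∧ σ i + a i ≤ 2*b*k + b := by
    intro i
    have hai := ha i
    have hTi := hend0 i
    obtain ⟨k, hk, hk1, hk2, _⟩ := hpt i (σ i) le_rfl (by omega) (by omega)
    refine ⟨k, hk, hk1, ?_⟩
    by_contra hcon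
    push_neg at hcon
    obtain ⟨k', hk', hk'1, hk'2, _⟩ := hpt i (2*b*k + b) (by omega) (by omega) (by omega)
    rcases Nat.lt_trichotomy k k' with h | h | h
    · have := mulstep k k' h; omega
    · subst h; omega
    · have := mulstep k' k h; omega
  -- generic slot facts
  have hjob' : ∀ (κ : ℕ), κ ≤ t+1 → ∀ (i : Fin t) (τ : ℕ), σ i ≤ τ → τ < σ i + a i →
      2*b*κ ≤ τ → τ < 2*b*κ + b →
      ((τ < u κ ∧ (κ = 0 ∨ ∃ k', κ = k'+1 ∧ u k' + 2*b ≤ τ)) ∨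
       (τ < v κ ∧ (κ = 0 ∨ ∃ k', κ = k'+1 ∧ v k' + 2*b ≤ τ))) := by
    intro κ hκ i τ h1 h2 h3 h4
    have hτT : τ < (2*t+3)*b := by have := slotT κ hκ; omega
    obtain ⟨k, hk, hk1, hk2, hdis⟩ := hpt i τ h1 h2 hτT
    have hkκ : k = κ := slotUniq k κ τ hk1 hk2 h3 h4
    subst hkκ
    exact hdis
  have hmem' : ∀ (κ : ℕ), κ ≤ t+1 → ∀ (i : Fin t) (τ : ℕ), σ i ≤ τ → τ < σ i + a i →
      2*b*κ ≤ τ → τ < 2*b*κ + b → 2*b*κ ≤ σ i ∧ σ i + a i ≤ 2*b*κ + b := by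
    intro κ hκ i τ h1 h2 h3 h4
    obtain ⟨k, hk, hka, hkb⟩ := hS i
    have hτa : 2*b*k ≤ τ := by omega
    have hτb : τ < 2*b*k + b := by omega
    have hkκ : k = κ := slotUniq k κ τ hτa hτb h3 h4
    subst hkκ
    exact ⟨hka, hkb⟩
  have hdisj' : ∀ (κ : ℕ), κ ≤ t+1 → ∀ τ,
      (κ = 0 ∨ ∃ k', κ = k'+1 ∧ u k' + 2*b ≤ τ) → τ < u κ →
      (κ = 0 ∨ ∃ k', κ = k'+1 ∧ v k' + 2*b ≤ τ) → τ < v κ → False := by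
    intro κ hκ τ hg1 hlt1 hg2 hlt2
    have hτT : τ < (2*t+3)*b := by
      have := slotT κ hκ
      have := hu2 κ hκ
      omega
    have idle1 := idlea u hu_le τ κ hκ hlt1 hg1
    have idle2 := idlea v hv_le τ κ hκ hlt2 hg2
    obtain ⟨_, k, hk, hva, hvb⟩ := H1 τ hτT idle1
    exact idle2 k hk ⟨hva, hvb⟩
  have hcov1' : ∀ (κ : ℕ), κ ≤ t+1 → ∀ τ,
      (κ = 0 ∨ ∃ k', κ = k'+1 ∧ u k' + 2*b ≤ τ) → τ < u κ →
      ∃ i : Fin t, σ i ≤ τ ∧ τ < σ i + a i := by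
    intro κ hκ τ hg hlt
    have hτT : τ < (2*t+3)*b := by
      have := slotT κ hκ
      have := hu2 κ hκ
      omega
    exact (H1 τ hτT (idlea u hu_le τ κ hκ hlt hg)).1
  have hcov2' : ∀ (κ : ℕ), κ ≤ t+1 → ∀ τ,
      (κ = 0 ∨ ∃ k', κ = k'+1 ∧ v k' + 2*b ≤ τ) → τ < v κ →
      ∃ i : Fin t, σ i ≤ τ ∧ τ < σ i + a i := by
    intro κ hκ τ hg hlt
    have hτT : τ < (2*t+3)*b := by
      have := slotT κ hκ
      have := hv2 κ hκ
      omega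
    exact (H2 τ hτT (idlea v hv_le τ κ hκ hlt hg)).1
  -- the invariant
  have Inv : ∀ k, k ≤ t+1 → ∃ A1 A2 : Finset (Fin t),
      (∀ i ∈ A1, σ i + a i ≤ 2*b*k + b) ∧ (∀ i ∈ A2, σ i + a i ≤ 2*b*k + b) ∧
      2*b*k + ∑ i ∈ A1, a i = u k ∧ 2*b*k + ∑ i ∈ A2, a i = v k := by
    intro k
    induction k with
    | zero =>
      intro hk
      have hz : 2*b*0 = 0 := by ring
      have hres := slot_lemma t b hb1 a ha σ hσm 0 0 (u 0) 0 (v 0)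
        (by omega) (hu2 0 (by omega)) (by omega) (hv2 0 (by omega))
        (Nat.zero_le _) (Nat.zero_le _)
        (fun τ _ h2 _ h4 => hdisj' 0 (by omega) τ (Or.inl rfl) h2 (Or.inl rfl) h4)
        (fun τ _ h2 => hcov1' 0 (by omega) τ (Or.inl rfl) h2)
        (fun τ _ h2 => hcov2' 0 (by omega) τ (Or.inl rfl) h2)
        (by
          intro i τ h1 h2 h3 h4
          rcases hjob' 0 (by omega) i τ h1 h2 h3 h4 with ⟨hlt, _⟩ | ⟨hlt, _⟩
          · exact Or.inl ⟨Nat.zero_le _, hlt⟩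
          · exact Or.inr ⟨Nat.zero_le _, hlt⟩)
        (fun i τ h1 h2 h3 h4 => hmem' 0 (by omega) i τ h1 h2 h3 h4)
      rcases hres with ⟨C1, hC1sub, hC1e, hC2e⟩ | ⟨heq, hCnt⟩ | ⟨heq, hCnt⟩
      · refine ⟨C1, Finset.univ.filter
            (fun i : Fin t => 2*b*0 ≤ σ i ∧ σ i + a i ≤ 2*b*0 + b) \ C1,
            ?_, ?_, by omega, by omega⟩
        · intro i hi
          have := (Finset.mem_filter.mp (hC1sub hi)).2
          omega
        · intro i hi
          have := (Finset.mem_filter.mp (Finset.mem_sdiff.mp hi).1).2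
          omega
      · refine ⟨∅, Finset.univ.filter
            (fun i : Fin t => 2*b*0 ≤ σ i ∧ σ i + a i ≤ 2*b*0 + b), ?_, ?_, ?_, ?_⟩
        · intro i hi; exact absurd hi (Finset.notMem_empty i)
        · intro i hi
          have := (Finset.mem_filter.mp hi).2
          omega
        · rw [Finset.sum_empty]; omega
        · omega
      · refine ⟨Finset.univ.filter
            (fun i : Fin t => 2*b*0 ≤ σ i ∧ σ i + a i ≤ 2*b*0 + b), ∅, ?_, ?_, ?_, ?_⟩
        · intro i hi
          have := (Finset.mem_filter.mp hi).2
          omega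
        · intro i hi; exact absurd hi (Finset.notMem_empty i)
        · omega
        · rw [Finset.sum_empty]; omega
    | succ k ih =>
      intro hk1
      obtain ⟨A1, A2, hA1b, hA2b, hA1s, hA2s⟩ := ih (by omega)
      have hkt : k ≤ t := by omega
      have he1 : 2*b*(k+1) = 2*b*k + 2*b := by ring
      have hx1' : 2*b*(k+1) ≤ u k + 2*b := by have := hu1 k (by omega); omega
      have hx2' : 2*b*(k+1) ≤ v k + 2*b := by have := hv1 k (by omega); omega
      have hres := slot_lemma t b hb1 a ha σ hσm (k+1) (u k + 2*b) (u (k+1))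
        (v k + 2*b) (v (k+1))
        hx1' (hu2 (k+1) hk1) hx2' (hv2 (k+1) hk1)
        (hu_step k hkt) (hv_step k hkt)
        (fun τ h1 h2 h3 h4 =>
          hdisj' (k+1) hk1 τ (Or.inr ⟨k, rfl, h1⟩) h2 (Or.inr ⟨k, rfl, h3⟩) h4)
        (fun τ h1 h2 => hcov1' (k+1) hk1 τ (Or.inr ⟨k, rfl, h1⟩) h2)
        (fun τ h1 h2 => hcov2' (k+1) hk1 τ (Or.inr ⟨k, rfl, h1⟩) h2)
        (by
          intro i τ h1 h2 h3 h4
          rcases hjob' (k+1) hk1 i τ h1 h2 h3 h4 with ⟨hlt, hg⟩ | ⟨hlt, hg⟩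
          · rcases hg with h0 | ⟨k', heq, hge⟩
            · omega
            · have hkk : k' = k := by omega
              subst hkk
              exact Or.inl ⟨hge, hlt⟩
          · rcases hg with h0 | ⟨k', heq, hge⟩
            · omega
            · have hkk : k' = k := by omega
              subst hkk
              exact Or.inr ⟨hge, hlt⟩)
        (fun i τ h1 h2 h3 h4 => hmem' (k+1) hk1 i τ h1 h2 h3 h4)
      -- the slot's jobs
      have hCb : ∀ i ∈ Finset.univ.filter
          (fun i : Fin t => 2*b*(k+1) ≤ σ i ∧ σ i + a i ≤ 2*b*(k+1) + b),
          2*b*(k+1) ≤ σ i ∧ σ i + a i ≤ 2*b*(k+1) + b :=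
        fun i hi => (Finset.mem_filter.mp hi).2
      have hdisjA : ∀ (B D : Finset (Fin t)), (∀ i ∈ B, σ i + a i ≤ 2*b*k + b) →
          (∀ i ∈ D, 2*b*(k+1) ≤ σ i ∧ σ i + a i ≤ 2*b*(k+1) + b) → Disjoint B D := by
        intro B D hB hD
        rw [Finset.disjoint_left]
        intro i hiB hiD
        have h1 := hB i hiB
        have h2 := (hD i hiD).1
        have h3 := ha i
        omega
      rcases hres with ⟨C1, hC1sub, hC1e, hC2e⟩ | ⟨heq, hCnt⟩ | ⟨heq, hCnt⟩
      · -- unmixed slot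
        have hC1b : ∀ i ∈ C1, 2*b*(k+1) ≤ σ i ∧ σ i + a i ≤ 2*b*(k+1) + b :=
          fun i hi => hCb i (hC1sub hi)
        have hC2b : ∀ i ∈ Finset.univ.filter
            (fun i : Fin t => 2*b*(k+1) ≤ σ i ∧ σ i + a i ≤ 2*b*(k+1) + b) \ C1,
            2*b*(k+1) ≤ σ i ∧ σ i + a i ≤ 2*b*(k+1) + b :=
          fun i hi => hCb i (Finset.mem_sdiff.mp hi).1
        refine ⟨A1 ∪ C1, A2 ∪ (Finset.univ.filter
            (fun i : Fin t => 2*b*(k+1) ≤ σ i ∧ σ i + a i ≤ 2*b*(k+1) + b) \ C1),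
            ?_, ?_, ?_, ?_⟩
        · intro i hi
          rcases Finset.mem_union.mp hi with h | h
          · have := hA1b i h; omega
          · exact (hC1b i h).2
        · intro i hi
          rcases Finset.mem_union.mp hi with h | h
          · have := hA2b i h; omega
          · exact (hC2b i h).2
        · rw [Finset.sum_union (hdisjA A1 C1 hA1b hC1b)]
          omega
        · rw [Finset.sum_union (hdisjA A2 _ hA2b hC2b)]
          omega
      · -- mixed slot, I1 ends where I2 begins : u (k+1) = v k + 2*b
        refine ⟨A2, A1 ∪ Finset.univ.filter
            (fun i : Fin t => 2*b*(k+1) ≤ σ i ∧ σ i + a i ≤ 2*b*(k+1) + b),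
            ?_, ?_, ?_, ?_⟩
        · intro i hi
          have := hA2b i hi; omega
        · intro i hi
          rcases Finset.mem_union.mp hi with h | h
          · have := hA1b i h; omega
          · exact (hCb i h).2
        · omega
        · rw [Finset.sum_union (hdisjA A1 _ hA1b hCb)]
          omega
      · -- mixed slot, I2 ends where I1 begins : v (k+1) = u k + 2*b
        refine ⟨A2 ∪ Finset.univ.filter
            (fun i : Fin t => 2*b*(k+1) ≤ σ i ∧ σ i + a i ≤ 2*b*(k+1) + b), A1,
            ?_, ?_, ?_, ?_⟩
        · intro i hi
          rcases Finset.mem_union.mp hi with h | h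
          · have := hA2b i h; omega
          · exact (hCb i h).2
        · intro i hi
          have := hA1b i hi; omega
        · rw [Finset.sum_union (hdisjA A2 _ hA2b hCb)]
          omega
        · omega
  obtain ⟨A1, A2, _, _, hs1, _⟩ := Inv (t+1) le_rfl
  rw [hu_T] at hs1
  have hfin : (2*t+3)*b = 2*b*(t+1) + b := by ring
  exact ⟨A1, by omega⟩
end


theorem forward_dir (t : ℕ) (a : Fin t → ℕ) (ha : ∀ i, 1 ≤ a i)
    (b : ℕ) (hb : ∑ i, a i = 2 * b)
    (A : Finset (Fin t)) (hA : ∑ i ∈ A, a i = ∑ i ∈ Aᶜ, a i) :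
      ∃ s : (Fin t ⊕ (Fin (t + 1) ⊕ Fin (t + 1))) → ℕ,
        (let p : (Fin t ⊕ (Fin (t + 1) ⊕ Fin (t + 1))) → ℕ :=
            Sum.elim a (Sum.elim (fun _ => 2 * b) (fun _ => 2 * b))
        (∀ (i : ℕ) (h : i + 1 < t),
            s (Sum.inl ⟨i, Nat.lt_of_succ_lt h⟩) + a ⟨i, Nat.lt_of_succ_lt h⟩ ≤
              s (Sum.inl ⟨i + 1, h⟩)) ∧
        (∀ (i : ℕ) (h : i + 1 < t + 1),
            s (Sum.inr (Sum.inl ⟨i, Nat.lt_of_succ_lt h⟩)) + 2 * b ≤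
              s (Sum.inr (Sum.inl ⟨i + 1, h⟩))) ∧
        (∀ (i : ℕ) (h : i + 1 < t + 1),
            s (Sum.inr (Sum.inr ⟨i, Nat.lt_of_succ_lt h⟩)) + 2 * b ≤
              s (Sum.inr (Sum.inr ⟨i + 1, h⟩))) ∧
        (∀ τ : ℕ,
            (Finset.univ.filter
              (fun j => s j ≤ τ ∧ τ < s j + p j)).card ≤ 2) ∧
        Finset.univ.sup (fun j => s j + p j) = (2 * t + 3) * b) := by
  classical
  have htot : ∑ i ∈ A, a i + ∑ i ∈ Aᶜ, a i = 2 * b := by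
    rw [Finset.sum_add_sum_compl]; exact hb
  have hAb : ∑ i ∈ A, a i = b := by omega
  have hAcb : ∑ i ∈ Aᶜ, a i = b := by omega
  have hαle : ∀ n, pSum a A n ≤ b := fun n => hAb ▸ pSum_le a A n
  have hβle : ∀ n, pSum a Aᶜ n ≤ b := fun n => hAcb ▸ pSum_le a Aᶜ n
  -- helper inequalities
  have bigbig : ∀ (D : Finset (Fin t)) (j j' : ℕ), j < j' →
      2 * b * j + pSum a D j + 2 * b ≤ 2 * b * j' + pSum a D j' := by
    intro D j j' hjj
    have h1 := pSum_mono a D (le_of_lt hjj)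
    have h2 : 2 * b * (j + 1) ≤ 2 * b * j' := Nat.mul_le_mul_left _ (by omega)
    have h3 : 2 * b * (j + 1) = 2 * b * j + 2 * b := by ring
    omega
  have bigsmall : ∀ (D : Finset (Fin t)) (j i : ℕ), j ≤ i →
      2 * b * j + pSum a D j + 2 * b ≤ 2 * b * (i + 1) + pSum a D i := by
    intro D j i hji
    have h1 := pSum_mono a D hji
    have h2 : 2 * b * (j + 1) ≤ 2 * b * (i + 1) := Nat.mul_le_mul_left _ (by omega)
    have h3 : 2 * b * (j + 1) = 2 * b * j + 2 * b := by ring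
    omega
  have smallbig : ∀ (D : Finset (Fin t)) (i : Fin t), i ∈ D → ∀ j : ℕ, (i : ℕ) < j →
      2 * b * ((i : ℕ) + 1) + pSum a D (i : ℕ) + a i ≤ 2 * b * j + pSum a D j := by
    intro D i hD j hij
    have h1 := pSum_succ_mem' a D i hD
    have h2 := pSum_mono a D (show (i : ℕ) + 1 ≤ j by omega)
    have h3 : 2 * b * ((i : ℕ) + 1) ≤ 2 * b * j := Nat.mul_le_mul_left _ (by omega)
    omega
  have smallsmall : ∀ (D : Finset (Fin t)) (i i' : Fin t), i ∈ D → (i : ℕ) < (i' : ℕ) →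
      2 * b * ((i : ℕ) + 1) + pSum a D (i : ℕ) + a i ≤
        2 * b * ((i' : ℕ) + 1) + pSum a D (i' : ℕ) := by
    intro D i i' hD hii
    have h1 := pSum_succ_mem' a D i hD
    have h2 := pSum_mono a D (show (i : ℕ) + 1 ≤ (i' : ℕ) by omega)
    have h3 : 2 * b * ((i : ℕ) + 1) ≤ 2 * b * ((i' : ℕ) + 1) :=
      Nat.mul_le_mul_left _ (by omega)
    omega
  -- the schedule
  refine ⟨fun j => Sum.elim
      (fun i : Fin t => 2 * b * ((i : ℕ) + 1) +
        (if i ∈ A then pSum a A (i : ℕ) else pSum a Aᶜ (i : ℕ)))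
      (Sum.elim (fun j : Fin (t+1) => 2 * b * (j : ℕ) + pSum a A (j : ℕ))
        (fun j : Fin (t+1) => 2 * b * (j : ℕ) + pSum a Aᶜ (j : ℕ))) j,
      ?_, ?_, ?_, ?_, ?_⟩
  · -- chain J0
    intro i h
    show 2 * b * (i + 1) +
        (if (⟨i, Nat.lt_of_succ_lt h⟩ : Fin t) ∈ A then pSum a A i else pSum a Aᶜ i) +
        a ⟨i, Nat.lt_of_succ_lt h⟩ ≤
      2 * b * (i + 1 + 1) +
        (if (⟨i + 1, h⟩ : Fin t) ∈ A then pSum a A (i + 1) else pSum a Aᶜ (i + 1))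
    have hXa : (if (⟨i, Nat.lt_of_succ_lt h⟩ : Fin t) ∈ A then pSum a A i else pSum a Aᶜ i)
        + a ⟨i, Nat.lt_of_succ_lt h⟩ ≤ b := by
      by_cases hm : (⟨i, Nat.lt_of_succ_lt h⟩ : Fin t) ∈ A
      · simp only [hm, if_true]
        have := pSum_succ_mem a A (Nat.lt_of_succ_lt h) hm
        have := hαle (i + 1)
        omega
      · simp only [hm, if_false]
        have := pSum_succ_mem a Aᶜ (Nat.lt_of_succ_lt h) (Finset.mem_compl.mpr hm)
        have := hβle (i + 1)
        omega
    have he1 : 2 * b * (i + 1 + 1) = 2 * b * (i + 1) + 2 * b := by ring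
    have hX2 : (0:ℕ) ≤ if (⟨i + 1, h⟩ : Fin t) ∈ A then pSum a A (i + 1) else pSum a Aᶜ (i + 1) :=
      Nat.zero_le _
    omega
  · -- chain J1
    intro i h
    show 2 * b * i + pSum a A i + 2 * b ≤ 2 * b * (i + 1) + pSum a A (i + 1)
    exact bigbig A i (i + 1) (by omega)
  · -- chain J2
    intro i h
    show 2 * b * i + pSum a Aᶜ i + 2 * b ≤ 2 * b * (i + 1) + pSum a Aᶜ (i + 1)
    exact bigbig Aᶜ i (i + 1) (by omega)
  · -- capacity
    intro τ
    by_contra hc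
    push_neg at hc
    have hpigeon := Finset.exists_ne_map_eq_of_card_lt_of_maps_to
      (t := (Finset.univ : Finset Bool))
      (by simpa using hc)
      (fun x _ => Finset.mem_univ
        (Sum.elim (fun i : Fin t => decide (i ∈ A))
          (Sum.elim (fun _ => true) (fun _ => false)) x))
    obtain ⟨x, hx, y, hy, hxy, hM⟩ := hpigeon
    simp only [Finset.mem_filter, Finset.mem_univ, true_and] at hx hy
    rcases x with i | x <;> rcases y with i' | y
    · -- two small jobs
      simp only [Sum.elim_inl] at hx hy hM
      have hii : (i : ℕ) ≠ (i' : ℕ) := fun hcon => hxy (congrArg Sum.inl (Fin.ext hcon))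
      simp only [decide_eq_decide] at hM
      by_cases hiA : i ∈ A
      · have hi'A : i' ∈ A := hM.mp hiA
        simp only [hiA, hi'A, if_true] at hx hy
        rcases Nat.lt_or_ge (i : ℕ) (i' : ℕ) with hlt | hge
        · have := smallsmall A i i' hiA hlt; omega
        · have := smallsmall A i' i hi'A (by omega); omega
      · have hi'A : i' ∉ A := fun hcon => hiA (hM.mpr hcon)
        simp only [hiA, hi'A, if_false] at hx hy
        rcases Nat.lt_or_ge (i : ℕ) (i' : ℕ) with hlt | hge
        · have := smallsmall Aᶜ i i' (Finset.mem_compl.mpr hiA) hlt; omega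
        · have := smallsmall Aᶜ i' i (Finset.mem_compl.mpr hi'A) (by omega); omega
    · rcases y with j | j
      · -- small (inl i) vs big J1
        simp only [Sum.elim_inl, Sum.elim_inr] at hx hy hM
        have hiA : i ∈ A := of_decide_eq_true hM
        simp only [hiA, if_true] at hx
        rcases Nat.lt_or_ge (i : ℕ) (j : ℕ) with hlt | hge
        · have := smallbig A i hiA j hlt; omega
        · have := bigsmall A j i hge; omega
      · -- small vs big J2
        simp only [Sum.elim_inl, Sum.elim_inr] at hx hy hM
        have hiA : i ∉ A := by
          intro hcon; rw [show (decide (i ∈ A)) = true from decide_eq_true hcon] at hM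
          exact Bool.noConfusion hM
        simp only [hiA, if_false] at hx
        rcases Nat.lt_or_ge (i : ℕ) (j : ℕ) with hlt | hge
        · have := smallbig Aᶜ i (Finset.mem_compl.mpr hiA) j hlt; omega
        · have := bigsmall Aᶜ j i hge; omega
    · rcases x with j | j
      · -- big J1 vs small
        simp only [Sum.elim_inl, Sum.elim_inr] at hx hy hM
        have hiA : i' ∈ A := of_decide_eq_true hM.symm
        simp only [hiA, if_true] at hy
        rcases Nat.lt_or_ge (i' : ℕ) (j : ℕ) with hlt | hge
        · have := smallbig A i' hiA j hlt; omega
        · have := bigsmall A j i' hge; omega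
      · -- big J2 vs small
        simp only [Sum.elim_inl, Sum.elim_inr] at hx hy hM
        have hiA : i' ∉ A := by
          intro hcon
          rw [show (decide (i' ∈ A)) = true from decide_eq_true hcon] at hM
          exact Bool.noConfusion hM.symm
        simp only [hiA, if_false] at hy
        rcases Nat.lt_or_ge (i' : ℕ) (j : ℕ) with hlt | hge
        · have := smallbig Aᶜ i' (Finset.mem_compl.mpr hiA) j hlt; omega
        · have := bigsmall Aᶜ j i' hge; omega
    · rcases x with j | j <;> rcases y with j' | j'
      · -- J1 vs J1
        simp only [Sum.elim_inr, Sum.elim_inl] at hx hy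
        have hjj : (j : ℕ) ≠ (j' : ℕ) := fun hcon =>
          hxy (by rw [Fin.ext hcon])
        rcases Nat.lt_or_ge (j : ℕ) (j' : ℕ) with hlt | hge
        · have := bigbig A j j' hlt; omega
        · have := bigbig A j' j (by omega); omega
      · -- J1 vs J2 : different machines
        simp only [Sum.elim_inr] at hM
        exact Bool.noConfusion hM
      · simp only [Sum.elim_inr] at hM
        exact Bool.noConfusion hM
      · -- J2 vs J2
        simp only [Sum.elim_inr, Sum.elim_inl] at hx hy
        have hjj : (j : ℕ) ≠ (j' : ℕ) := fun hcon =>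
          hxy (by rw [Fin.ext hcon])
        rcases Nat.lt_or_ge (j : ℕ) (j' : ℕ) with hlt | hge
        · have := bigbig Aᶜ j j' hlt; omega
        · have := bigbig Aᶜ j' j (by omega); omega
  · -- makespan
    apply le_antisymm
    · apply Finset.sup_le
      intro x _
      rcases x with i | x
      · show 2 * b * ((i : ℕ) + 1) +
            (if i ∈ A then pSum a A (i : ℕ) else pSum a Aᶜ (i : ℕ)) + a i ≤ (2 * t + 3) * b
        have hXa : (if i ∈ A then pSum a A (i : ℕ) else pSum a Aᶜ (i : ℕ)) + a i ≤ b := by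
          by_cases hm : i ∈ A
          · simp only [hm, if_true]
            have := pSum_succ_mem' a A i hm
            have := hαle ((i : ℕ) + 1)
            omega
          · simp only [hm, if_false]
            have := pSum_succ_mem' a Aᶜ i (Finset.mem_compl.mpr hm)
            have := hβle ((i : ℕ) + 1)
            omega
        have h2 : 2 * b * ((i : ℕ) + 1) ≤ 2 * b * t := Nat.mul_le_mul_left _ (by
          have := i.isLt; omega)
        have h3 : (2 * t + 3) * b = 2 * b * t + 3 * b := by ring
        omega
      · rcases x with j | j
        · show 2 * b * (j : ℕ) + pSum a A (j : ℕ) + 2 * b ≤ (2 * t + 3) * b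
          have h1 := hαle (j : ℕ)
          have h2 : 2 * b * (j : ℕ) ≤ 2 * b * t := Nat.mul_le_mul_left _ (by
            have := j.isLt; omega)
          have h3 : (2 * t + 3) * b = 2 * b * t + 3 * b := by ring
          omega
        · show 2 * b * (j : ℕ) + pSum a Aᶜ (j : ℕ) + 2 * b ≤ (2 * t + 3) * b
          have h1 := hβle (j : ℕ)
          have h2 : 2 * b * (j : ℕ) ≤ 2 * b * t := Nat.mul_le_mul_left _ (by
            have := j.isLt; omega)
          have h3 : (2 * t + 3) * b = 2 * b * t + 3 * b := by ring
          omega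
    · have hle := Finset.le_sup (f := fun j : Fin t ⊕ (Fin (t+1) ⊕ Fin (t+1)) =>
        (Sum.elim
          (fun i : Fin t => 2 * b * ((i : ℕ) + 1) +
            (if i ∈ A then pSum a A (i : ℕ) else pSum a Aᶜ (i : ℕ)))
          (Sum.elim (fun j : Fin (t+1) => 2 * b * (j : ℕ) + pSum a A (j : ℕ))
            (fun j : Fin (t+1) => 2 * b * (j : ℕ) + pSum a Aᶜ (j : ℕ))) j) +
          (Sum.elim a (Sum.elim (fun _ => 2 * b) (fun _ => 2 * b)) j))
        (Finset.mem_univ (Sum.inr (Sum.inl ⟨t, Nat.lt_succ_self t⟩)))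
      have hval : 2 * b * t + pSum a A t + 2 * b = (2 * t + 3) * b := by
        rw [pSum_top, hAb]; ring
      simp only [Sum.elim_inr, Sum.elim_inl] at hle
      calc (2 * t + 3) * b = 2 * b * t + pSum a A t + 2 * b := hval.symm
        _ ≤ _ := hle


theorem backward_dir (t : ℕ) (a : Fin t → ℕ) (ha : ∀ i, 1 ≤ a i)
    (b : ℕ) (hb : ∑ i, a i = 2 * b)
    (s : (Fin t ⊕ (Fin (t + 1) ⊕ Fin (t + 1))) → ℕ)
    (h0 : ∀ (i : ℕ) (h : i + 1 < t),
      s (Sum.inl ⟨i, Nat.lt_of_succ_lt h⟩) + a ⟨i, Nat.lt_of_succ_lt h⟩ ≤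
        s (Sum.inl ⟨i + 1, h⟩))
    (h1 : ∀ (i : ℕ) (h : i + 1 < t + 1),
      s (Sum.inr (Sum.inl ⟨i, Nat.lt_of_succ_lt h⟩)) + 2 * b ≤
        s (Sum.inr (Sum.inl ⟨i + 1, h⟩)))
    (h2 : ∀ (i : ℕ) (h : i + 1 < t + 1),
      s (Sum.inr (Sum.inr ⟨i, Nat.lt_of_succ_lt h⟩)) + 2 * b ≤
        s (Sum.inr (Sum.inr ⟨i + 1, h⟩)))
    (hcap : ∀ τ : ℕ, (Finset.univ.filter (fun j => s j ≤ τ ∧ τ < s j +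
      Sum.elim a (Sum.elim (fun _ => 2 * b) (fun _ => 2 * b)) j)).card ≤ 2)
    (hmk : Finset.univ.sup (fun j => s j +
      Sum.elim a (Sum.elim (fun _ => 2 * b) (fun _ => 2 * b)) j) = (2 * t + 3) * b) :
    ∃ A : Finset (Fin t), ∑ i ∈ A, a i = ∑ i ∈ Aᶜ, a i := by
  classical
  rcases Nat.eq_zero_or_pos t with rfl | htpos
  · exact ⟨∅, by simp⟩
  have hb1 : 1 ≤ b := by
    have hcard : Finset.univ.card • 1 ≤ ∑ i : Fin t, a i :=
      Finset.card_nsmul_le_sum _ _ _ (fun i _ => ha i)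
    simp only [Finset.card_univ, Fintype.card_fin, smul_eq_mul, mul_one] at hcard
    omega
  have hend : ∀ j, s j + Sum.elim a (Sum.elim (fun _ => 2 * b) (fun _ => 2 * b)) j ≤
      (2 * t + 3) * b := by
    intro j
    have h := Finset.le_sup (f := fun j => s j +
      Sum.elim a (Sum.elim (fun _ => 2 * b) (fun _ => 2 * b)) j) (Finset.mem_univ j)
    rw [hmk] at h
    exact h
  -- chain monotonicity
  have key0 : ∀ (n m : ℕ) (hn : n < t) (hm : m < t), m < n →
      s (Sum.inl ⟨m, hm⟩) + a ⟨m, hm⟩ ≤ s (Sum.inl ⟨n, hn⟩) := by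
    intro n
    induction n with
    | zero => intro m hn hm hlt; omega
    | succ n ih =>
      intro m hn hm hlt
      have hstep := h0 n hn
      rcases Nat.lt_or_ge m n with h | h
      · exact le_trans (ih m (Nat.lt_of_succ_lt hn) hm h)
          (le_trans (Nat.le_add_right _ _) hstep)
      · have hmn : m = n := by omega
        subst hmn
        exact hstep
  have key1 : ∀ (n m : ℕ) (hn : n < t + 1) (hm : m < t + 1), m < n →
      s (Sum.inr (Sum.inl ⟨m, hm⟩)) + 2 * b ≤ s (Sum.inr (Sum.inl ⟨n, hn⟩)) := by
    intro n
    induction n with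
    | zero => intro m hn hm hlt; omega
    | succ n ih =>
      intro m hn hm hlt
      have hstep := h1 n hn
      rcases Nat.lt_or_ge m n with h | h
      · exact le_trans (ih m (Nat.lt_of_succ_lt hn) hm h)
          (le_trans (Nat.le_add_right _ _) hstep)
      · have hmn : m = n := by omega
        subst hmn
        exact hstep
  have key2 : ∀ (n m : ℕ) (hn : n < t + 1) (hm : m < t + 1), m < n →
      s (Sum.inr (Sum.inr ⟨m, hm⟩)) + 2 * b ≤ s (Sum.inr (Sum.inr ⟨n, hn⟩)) := by
    intro n
    induction n with
    | zero => intro m hn hm hlt; omega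
    | succ n ih =>
      intro m hn hm hlt
      have hstep := h2 n hn
      rcases Nat.lt_or_ge m n with h | h
      · exact le_trans (ih m (Nat.lt_of_succ_lt hn) hm h)
          (le_trans (Nat.le_add_right _ _) hstep)
      · have hmn : m = n := by omega
        subst hmn
        exact hstep
  have σm : ∀ i j : Fin t, (i : ℕ) < (j : ℕ) →
      s (Sum.inl i) + a i ≤ s (Sum.inl j) :=
    fun i j hij => key0 j i j.isLt i.isLt hij
  have J1m : ∀ i j : Fin (t+1), (i : ℕ) < (j : ℕ) →
      s (Sum.inr (Sum.inl i)) + 2 * b ≤ s (Sum.inr (Sum.inl j)) :=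
    fun i j hij => key1 j i j.isLt i.isLt hij
  have J2m : ∀ i j : Fin (t+1), (i : ℕ) < (j : ℕ) →
      s (Sum.inr (Sum.inr i)) + 2 * b ≤ s (Sum.inr (Sum.inr j)) :=
    fun i j hij => key2 j i j.isLt i.isLt hij
  -- total work
  have hwork : ∑ j : Fin t ⊕ (Fin (t + 1) ⊕ Fin (t + 1)),
      Sum.elim a (Sum.elim (fun _ => 2 * b) (fun _ => 2 * b)) j = 2 * ((2 * t + 3) * b) := by
    rw [Fintype.sum_sum_type, Fintype.sum_sum_type]
    simp only [Sum.elim_inl, Sum.elim_inr, Finset.sum_const, Finset.card_univ,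
      Fintype.card_fin, smul_eq_mul, hb]
    ring
  -- double counting
  have hdouble : ∑ τ ∈ Finset.range ((2 * t + 3) * b),
      (Finset.univ.filter (fun j => s j ≤ τ ∧ τ < s j +
        Sum.elim a (Sum.elim (fun _ => 2 * b) (fun _ => 2 * b)) j)).card
      = 2 * ((2 * t + 3) * b) := by
    simp_rw [Finset.card_filter]
    rw [Finset.sum_comm]
    rw [← hwork]
    apply Finset.sum_congr rfl
    intro j _
    rw [← Finset.card_filter]
    have hIco : (Finset.range ((2 * t + 3) * b)).filter
        (fun τ => s j ≤ τ ∧ τ < s j + Sum.elim a (Sum.elim (fun _ => 2 * b) (fun _ => 2 * b)) j)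
        = Finset.Ico (s j) (s j + Sum.elim a (Sum.elim (fun _ => 2 * b) (fun _ => 2 * b)) j) := by
      ext τ
      simp only [Finset.mem_filter, Finset.mem_range, Finset.mem_Ico]
      have := hend j
      omega
    rw [hIco, Nat.card_Ico]
    omega
  have hcount : ∀ τ, τ < (2 * t + 3) * b →
      (Finset.univ.filter (fun j => s j ≤ τ ∧ τ < s j +
        Sum.elim a (Sum.elim (fun _ => 2 * b) (fun _ => 2 * b)) j)).card = 2 := by
    intro τ hτ
    by_contra hne
    have hlt : (Finset.univ.filter (fun j => s j ≤ τ ∧ τ < s j +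
        Sum.elim a (Sum.elim (fun _ => 2 * b) (fun _ => 2 * b)) j)).card < 2 :=
      lt_of_le_of_ne (hcap τ) hne
    have hsumlt : ∑ τ' ∈ Finset.range ((2 * t + 3) * b),
        (Finset.univ.filter (fun j => s j ≤ τ' ∧ τ' < s j +
          Sum.elim a (Sum.elim (fun _ => 2 * b) (fun _ => 2 * b)) j)).card
        < ∑ _τ' ∈ Finset.range ((2 * t + 3) * b), 2 :=
      Finset.sum_lt_sum (fun τ' _ => hcap τ') ⟨τ, Finset.mem_range.mpr hτ, hlt⟩
    rw [hdouble, Finset.sum_const, Finset.card_range, smul_eq_mul] at hsumlt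
    omega
  -- count splitting over the three chains
  have hsplit : ∀ τ : ℕ,
      (Finset.univ.filter (fun j => s j ≤ τ ∧ τ < s j +
        Sum.elim a (Sum.elim (fun _ => 2 * b) (fun _ => 2 * b)) j)).card
      = (Finset.univ.filter (fun i : Fin t =>
          s (Sum.inl i) ≤ τ ∧ τ < s (Sum.inl i) + a i)).card
      + (Finset.univ.filter (fun j : Fin (t+1) =>
          s (Sum.inr (Sum.inl j)) ≤ τ ∧ τ < s (Sum.inr (Sum.inl j)) + 2 * b)).card
      + (Finset.univ.filter (fun j : Fin (t+1) =>
          s (Sum.inr (Sum.inr j)) ≤ τ ∧ τ < s (Sum.inr (Sum.inr j)) + 2 * b)).card := by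
    intro τ
    simp_rw [Finset.card_filter]
    rw [Fintype.sum_sum_type, Fintype.sum_sum_type]
    simp only [Sum.elim_inl, Sum.elim_inr]
    exact (add_assoc _ _ _).symm
  -- at most one running job per chain
  have hcard0 : ∀ τ, (Finset.univ.filter (fun i : Fin t =>
      s (Sum.inl i) ≤ τ ∧ τ < s (Sum.inl i) + a i)).card ≤ 1 := by
    intro τ
    apply Finset.card_le_one.mpr
    intro x hx y hy
    simp only [Finset.mem_filter, Finset.mem_univ, true_and] at hx hy
    by_contra hne
    have hvne : (x : ℕ) ≠ (y : ℕ) := fun hc => hne (Fin.ext hc)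
    rcases Nat.lt_or_ge (x : ℕ) (y : ℕ) with h | h
    · have := σm x y h; omega
    · have := σm y x (by omega); omega
  have hcard1 : ∀ τ, (Finset.univ.filter (fun j : Fin (t+1) =>
      s (Sum.inr (Sum.inl j)) ≤ τ ∧ τ < s (Sum.inr (Sum.inl j)) + 2 * b)).card ≤ 1 := by
    intro τ
    apply Finset.card_le_one.mpr
    intro x hx y hy
    simp only [Finset.mem_filter, Finset.mem_univ, true_and] at hx hy
    by_contra hne
    have hvne : (x : ℕ) ≠ (y : ℕ) := fun hc => hne (Fin.ext hc)
    rcases Nat.lt_or_ge (x : ℕ) (y : ℕ) with h | h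
    · have := J1m x y h; omega
    · have := J1m y x (by omega); omega
  have hcard2 : ∀ τ, (Finset.univ.filter (fun j : Fin (t+1) =>
      s (Sum.inr (Sum.inr j)) ≤ τ ∧ τ < s (Sum.inr (Sum.inr j)) + 2 * b)).card ≤ 1 := by
    intro τ
    apply Finset.card_le_one.mpr
    intro x hx y hy
    simp only [Finset.mem_filter, Finset.mem_univ, true_and] at hx hy
    by_contra hne
    have hvne : (x : ℕ) ≠ (y : ℕ) := fun hc => hne (Fin.ext hc)
    rcases Nat.lt_or_ge (x : ℕ) (y : ℕ) with h | h
    · have := J2m x y h; omega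
    · have := J2m y x (by omega); omega
  -- core hypotheses
  have hu_step : ∀ k, k ≤ t →
      (if h : k < t + 1 then s (Sum.inr (Sum.inl ⟨k, h⟩)) else (2 * t + 3) * b) + 2 * b ≤
      (if h : k + 1 < t + 1 then s (Sum.inr (Sum.inl ⟨k + 1, h⟩)) else (2 * t + 3) * b) := by
    intro k hk
    rcases Nat.lt_or_ge k t with h | h
    · rw [dif_pos (show k < t + 1 by omega), dif_pos (show k + 1 < t + 1 by omega)]
      exact h1 k (by omega)
    · have hkt : k = t := by omega
      subst hkt
      rw [dif_pos (Nat.lt_succ_self k), dif_neg (lt_irrefl (k + 1))]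
      have hh := hend (Sum.inr (Sum.inl ⟨k, Nat.lt_succ_self k⟩))
      simpa using hh
  have hv_step : ∀ k, k ≤ t →
      (if h : k < t + 1 then s (Sum.inr (Sum.inr ⟨k, h⟩)) else (2 * t + 3) * b) + 2 * b ≤
      (if h : k + 1 < t + 1 then s (Sum.inr (Sum.inr ⟨k + 1, h⟩)) else (2 * t + 3) * b) := by
    intro k hk
    rcases Nat.lt_or_ge k t with h | h
    · rw [dif_pos (show k < t + 1 by omega), dif_pos (show k + 1 < t + 1 by omega)]
      exact h2 k (by omega)
    · have hkt : k = t := by omega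
      subst hkt
      rw [dif_pos (Nat.lt_succ_self k), dif_neg (lt_irrefl (k + 1))]
      have hh := hend (Sum.inr (Sum.inr ⟨k, Nat.lt_succ_self k⟩))
      simpa using hh
  have hu_T : (if h : t + 1 < t + 1 then s (Sum.inr (Sum.inl ⟨t + 1, h⟩))
      else (2 * t + 3) * b) = (2 * t + 3) * b := dif_neg (lt_irrefl _)
  have hv_T : (if h : t + 1 < t + 1 then s (Sum.inr (Sum.inr ⟨t + 1, h⟩))
      else (2 * t + 3) * b) = (2 * t + 3) * b := dif_neg (lt_irrefl _)
  have H1' : ∀ τ, τ < (2 * t + 3) * b →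
      (∀ k, k ≤ t → ¬((if h : k < t + 1 then s (Sum.inr (Sum.inl ⟨k, h⟩))
          else (2 * t + 3) * b) ≤ τ ∧
        τ < (if h : k < t + 1 then s (Sum.inr (Sum.inl ⟨k, h⟩)) else (2 * t + 3) * b) + 2 * b)) →
      (∃ i : Fin t, s (Sum.inl i) ≤ τ ∧ τ < s (Sum.inl i) + a i) ∧
      (∃ k, k ≤ t ∧ (if h : k < t + 1 then s (Sum.inr (Sum.inr ⟨k, h⟩))
          else (2 * t + 3) * b) ≤ τ ∧
        τ < (if h : k < t + 1 then s (Sum.inr (Sum.inr ⟨k, h⟩)) else (2 * t + 3) * b) + 2 * b) := by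
    intro τ hτ hidle
    have hc1 : (Finset.univ.filter (fun j : Fin (t+1) =>
        s (Sum.inr (Sum.inl j)) ≤ τ ∧ τ < s (Sum.inr (Sum.inl j)) + 2 * b)).card = 0 := by
      rw [Finset.card_eq_zero, Finset.filter_eq_empty_iff]
      intro j _
      have hh := hidle (j : ℕ) (by omega)
      rw [dif_pos j.isLt] at hh
      exact hh
    have hcnt := hcount τ hτ
    have hsp := hsplit τ
    have h0le := hcard0 τ
    have h2le := hcard2 τ
    constructor
    · obtain ⟨i, hi⟩ := Finset.card_pos.mp (show 0 <
        (Finset.univ.filter (fun i : Fin t =>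
          s (Sum.inl i) ≤ τ ∧ τ < s (Sum.inl i) + a i)).card by omega)
      exact ⟨i, (Finset.mem_filter.mp hi).2⟩
    · obtain ⟨j, hj⟩ := Finset.card_pos.mp (show 0 <
        (Finset.univ.filter (fun j : Fin (t+1) =>
          s (Sum.inr (Sum.inr j)) ≤ τ ∧ τ < s (Sum.inr (Sum.inr j)) + 2 * b)).card by omega)
      have hj' := (Finset.mem_filter.mp hj).2
      refine ⟨(j : ℕ), by omega, ?_⟩
      rw [dif_pos j.isLt]
      exact hj'
  have H2' : ∀ τ, τ < (2 * t + 3) * b →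
      (∀ k, k ≤ t → ¬((if h : k < t + 1 then s (Sum.inr (Sum.inr ⟨k, h⟩))
          else (2 * t + 3) * b) ≤ τ ∧
        τ < (if h : k < t + 1 then s (Sum.inr (Sum.inr ⟨k, h⟩)) else (2 * t + 3) * b) + 2 * b)) →
      (∃ i : Fin t, s (Sum.inl i) ≤ τ ∧ τ < s (Sum.inl i) + a i) ∧
      (∃ k, k ≤ t ∧ (if h : k < t + 1 then s (Sum.inr (Sum.inl ⟨k, h⟩))
          else (2 * t + 3) * b) ≤ τ ∧
        τ < (if h : k < t + 1 then s (Sum.inr (Sum.inl ⟨k, h⟩)) else (2 * t + 3) * b) + 2 * b) := by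
    intro τ hτ hidle
    have hc2 : (Finset.univ.filter (fun j : Fin (t+1) =>
        s (Sum.inr (Sum.inr j)) ≤ τ ∧ τ < s (Sum.inr (Sum.inr j)) + 2 * b)).card = 0 := by
      rw [Finset.card_eq_zero, Finset.filter_eq_empty_iff]
      intro j _
      have hh := hidle (j : ℕ) (by omega)
      rw [dif_pos j.isLt] at hh
      exact hh
    have hcnt := hcount τ hτ
    have hsp := hsplit τ
    have h0le := hcard0 τ
    have h1le := hcard1 τ
    constructor
    · obtain ⟨i, hi⟩ := Finset.card_pos.mp (show 0 <
        (Finset.univ.filter (fun i : Fin t =>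
          s (Sum.inl i) ≤ τ ∧ τ < s (Sum.inl i) + a i)).card by omega)
      exact ⟨i, (Finset.mem_filter.mp hi).2⟩
    · obtain ⟨j, hj⟩ := Finset.card_pos.mp (show 0 <
        (Finset.univ.filter (fun j : Fin (t+1) =>
          s (Sum.inr (Sum.inl j)) ≤ τ ∧ τ < s (Sum.inr (Sum.inl j)) + 2 * b)).card by omega)
      have hj' := (Finset.mem_filter.mp hj).2
      refine ⟨(j : ℕ), by omega, ?_⟩
      rw [dif_pos j.isLt]
      exact hj'
  have H3' : ∀ τ, τ < (2 * t + 3) * b → ∀ i : Fin t,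
      s (Sum.inl i) ≤ τ → τ < s (Sum.inl i) + a i →
      (∀ k, k ≤ t → ¬((if h : k < t + 1 then s (Sum.inr (Sum.inl ⟨k, h⟩))
          else (2 * t + 3) * b) ≤ τ ∧
        τ < (if h : k < t + 1 then s (Sum.inr (Sum.inl ⟨k, h⟩)) else (2 * t + 3) * b) + 2 * b)) ∨
      (∀ k, k ≤ t → ¬((if h : k < t + 1 then s (Sum.inr (Sum.inr ⟨k, h⟩))
          else (2 * t + 3) * b) ≤ τ ∧
        τ < (if h : k < t + 1 then s (Sum.inr (Sum.inr ⟨k, h⟩)) else (2 * t + 3) * b) + 2 * b)) := by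
    intro τ hτ i hi1 hi2
    by_contra hcon
    push_neg at hcon
    obtain ⟨⟨k1, hk1, hu1c, hu2c⟩, ⟨k2, hk2, hv1c, hv2c⟩⟩ := hcon
    rw [dif_pos (show k1 < t + 1 by omega)] at hu1c hu2c
    rw [dif_pos (show k2 < t + 1 by omega)] at hv1c hv2c
    have hm1 : 0 < (Finset.univ.filter (fun j : Fin (t+1) =>
        s (Sum.inr (Sum.inl j)) ≤ τ ∧ τ < s (Sum.inr (Sum.inl j)) + 2 * b)).card :=
      Finset.card_pos.mpr ⟨⟨k1, by omega⟩, Finset.mem_filter.mpr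
        ⟨Finset.mem_univ _, hu1c, hu2c⟩⟩
    have hm2 : 0 < (Finset.univ.filter (fun j : Fin (t+1) =>
        s (Sum.inr (Sum.inr j)) ≤ τ ∧ τ < s (Sum.inr (Sum.inr j)) + 2 * b)).card :=
      Finset.card_pos.mpr ⟨⟨k2, by omega⟩, Finset.mem_filter.mpr
        ⟨Finset.mem_univ _, hv1c, hv2c⟩⟩
    have hm0 : 0 < (Finset.univ.filter (fun i : Fin t =>
        s (Sum.inl i) ≤ τ ∧ τ < s (Sum.inl i) + a i)).card :=
      Finset.card_pos.mpr ⟨i, Finset.mem_filter.mpr ⟨Finset.mem_univ _, hi1, hi2⟩⟩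
    have hcnt := hcount τ hτ
    have hsp := hsplit τ
    omega
  have hend0 : ∀ i : Fin t, s (Sum.inl i) + a i ≤ (2 * t + 3) * b := by
    intro i
    have hh := hend (Sum.inl i)
    simpa using hh
  obtain ⟨A, hA⟩ := core t b hb1 a ha (fun i => s (Sum.inl i))
    (fun k => if h : k < t + 1 then s (Sum.inr (Sum.inl ⟨k, h⟩)) else (2 * t + 3) * b)
    (fun k => if h : k < t + 1 then s (Sum.inr (Sum.inr ⟨k, h⟩)) else (2 * t + 3) * b)
    σm hend0 hu_step hu_T hv_step hv_T H1' H2' H3'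
  refine ⟨A, ?_⟩
  have hcompl := Finset.sum_add_sum_compl A a
  rw [hb] at hcompl
  omega


/-- Weak NP-hardness reduction correctness (Theorem 1): a multiset `a_1, …, a_t` of
positive integers with sum `2b` admits a partition into two parts of equal sums iff
the three-chain scheduling instance (chain `J0` of jobs with processing times `a_i`,
chains `J1`, `J2` each of `t+1` jobs of processing time `2b`) admits a non-preemptive
schedule on two identical machines with makespan `(2t+3)·b`. -/
theorem partition_iff_three_chain_schedule (t : ℕ) (a : Fin t → ℕ) (ha : ∀ i, 1 ≤ a i)
    (b : ℕ) (hb : ∑ i, a i = 2 * b) :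
    (∃ A : Finset (Fin t), ∑ i ∈ A, a i = ∑ i ∈ Aᶜ, a i) ↔
      ∃ s : (Fin t ⊕ (Fin (t + 1) ⊕ Fin (t + 1))) → ℕ,
        -- processing times
        (let p : (Fin t ⊕ (Fin (t + 1) ⊕ Fin (t + 1))) → ℕ :=
            Sum.elim a (Sum.elim (fun _ => 2 * b) (fun _ => 2 * b))
        -- chain `J0`
        (∀ (i : ℕ) (h : i + 1 < t),
            s (Sum.inl ⟨i, Nat.lt_of_succ_lt h⟩) + a ⟨i, Nat.lt_of_succ_lt h⟩ ≤
              s (Sum.inl ⟨i + 1, h⟩)) ∧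
        -- chain `J1`
        (∀ (i : ℕ) (h : i + 1 < t + 1),
            s (Sum.inr (Sum.inl ⟨i, Nat.lt_of_succ_lt h⟩)) + 2 * b ≤
              s (Sum.inr (Sum.inl ⟨i + 1, h⟩))) ∧
        -- chain `J2`
        (∀ (i : ℕ) (h : i + 1 < t + 1),
            s (Sum.inr (Sum.inr ⟨i, Nat.lt_of_succ_lt h⟩)) + 2 * b ≤
              s (Sum.inr (Sum.inr ⟨i + 1, h⟩))) ∧
        -- at any time at most two jobs are being processed (two machines)
        (∀ τ : ℕ,
            (Finset.univ.filter
              (fun j => s j ≤ τ ∧ τ < s j + p j)).card ≤ 2) ∧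
        -- the makespan is `(2t+3)·b`
        Finset.univ.sup (fun j => s j + p j) = (2 * t + 3) * b) := by
  constructor
  · rintro ⟨A, hA⟩
    exact forward_dir t a ha b hb A hA
  · rintro ⟨s, hs⟩
    obtain ⟨h0, h1, h2, hcap, hmk⟩ := hs
    exact backward_dir t a ha b hb s h0 h1 h2 hcap hmk
end
end

section
/- In any schedule of the three-chain instance with makespan exactly (2t+3)b, each machine processes exactly t+1 of the 2(t+1) long jobs of length 2b, and the total processing time of short jobs assigned to each machine is exactly b. -/
/-- Jobs on one machine whose busy intervals pairwise do not overlap and all finish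
by time `T` have total processing time at most `T`. -/
lemma aux_load_le {J : Type*} [DecidableEq J] (s p : J → ℕ) (T : ℕ)
    (hfin : ∀ j, s j + p j ≤ T) (F : Finset J)
    (hdisj : ∀ j ∈ F, ∀ j' ∈ F, j ≠ j' → s j + p j ≤ s j' ∨ s j' + p j' ≤ s j) :
    ∑ j ∈ F, p j ≤ T := by
  have hd : ∀ j ∈ F, ∀ j' ∈ F, j ≠ j' →
      Disjoint (Finset.Ico (s j) (s j + p j)) (Finset.Ico (s j') (s j' + p j')) := by
    intro j hj j' hj' hne
    rcases hdisj j hj j' hj' hne with h | h <;>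
      · rw [Finset.disjoint_left]
        intro x hx hx'
        simp only [Finset.mem_Ico] at hx hx'
        omega
  calc ∑ j ∈ F, p j = ∑ j ∈ F, (Finset.Ico (s j) (s j + p j)).card := by
        simp [Nat.card_Ico]
    _ = (F.biUnion fun j => Finset.Ico (s j) (s j + p j)).card :=
        (Finset.card_biUnion hd).symm
    _ ≤ (Finset.range T).card := by
        apply Finset.card_le_card
        intro x hx
        simp only [Finset.mem_biUnion, Finset.mem_Ico] at hx
        obtain ⟨j, _, _, hx2⟩ := hx
        exact Finset.mem_range.mpr (lt_of_lt_of_le hx2 (hfin j))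
    _ = T := Finset.card_range T


/-- In any two-machine schedule of the three-chain instance with makespan exactly
`(2t+3)·b`, each machine processes exactly `t+1` of the `2(t+1)` long jobs of length
`2b`, and the total processing time of the short jobs assigned to each machine is
exactly `b`. -/
theorem three_chain_schedule_machine_loads (t b : ℕ) (hb : 1 ≤ b)
    (a : Fin t → ℕ) (ha : ∀ i, 1 ≤ a i ∧ a i ≤ b) (hsum : ∑ i, a i = 2 * b)
    (M : (Fin t ⊕ (Fin (t + 1) ⊕ Fin (t + 1))) → Fin 2)
    (s : (Fin t ⊕ (Fin (t + 1) ⊕ Fin (t + 1))) → ℕ)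
    (p : (Fin t ⊕ (Fin (t + 1) ⊕ Fin (t + 1))) → ℕ)
    (hp : p = Sum.elim a (Sum.elim (fun _ => 2 * b) (fun _ => 2 * b)))
    -- chain `J0` is processed in order
    (hchain0 : ∀ (i : ℕ) (h : i + 1 < t),
        s (Sum.inl ⟨i, Nat.lt_of_succ_lt h⟩) + a ⟨i, Nat.lt_of_succ_lt h⟩ ≤
          s (Sum.inl ⟨i + 1, h⟩))
    -- chain `J1` is processed in order
    (hchain1 : ∀ (i : ℕ) (h : i + 1 < t + 1),
        s (Sum.inr (Sum.inl ⟨i, Nat.lt_of_succ_lt h⟩)) + 2 * b ≤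
          s (Sum.inr (Sum.inl ⟨i + 1, h⟩)))
    -- chain `J2` is processed in order
    (hchain2 : ∀ (i : ℕ) (h : i + 1 < t + 1),
        s (Sum.inr (Sum.inr ⟨i, Nat.lt_of_succ_lt h⟩)) + 2 * b ≤
          s (Sum.inr (Sum.inr ⟨i + 1, h⟩)))
    -- each machine processes at most one job at a time
    (hmach : ∀ j j', j ≠ j' → M j = M j' → s j + p j ≤ s j' ∨ s j' + p j' ≤ s j)
    -- the makespan is exactly `(2t+3)·b`
    (hmak : Finset.univ.sup (fun j => s j + p j) = (2 * t + 3) * b) :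
    ∀ m : Fin 2,
      ((Finset.univ.filter (fun i : Fin (t + 1) => M (Sum.inr (Sum.inl i)) = m)).card +
        (Finset.univ.filter (fun i : Fin (t + 1) => M (Sum.inr (Sum.inr i)) = m)).card
          = t + 1) ∧
      ∑ i ∈ Finset.univ.filter (fun i : Fin t => M (Sum.inl i) = m), a i = b := by
  have h01 : ∀ x : Fin 2, ¬ x = 0 ↔ x = 1 := by decide
  have h2cases : ∀ x : Fin 2, x = 0 ∨ x = 1 := by decide
  -- every job finishes by time T
  have hfin : ∀ j, s j + p j ≤ (2 * t + 3) * b := by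
    intro j
    rw [← hmak]
    exact Finset.le_sup (f := fun j => s j + p j) (Finset.mem_univ j)
  -- each machine's load is at most T
  have hload : ∀ m' : Fin 2,
      ∑ j ∈ Finset.univ.filter (fun j => M j = m'), p j ≤ (2 * t + 3) * b := by
    intro m'
    apply aux_load_le s p _ hfin
    intro j hj j' hj' hne
    simp only [Finset.mem_filter] at hj hj'
    exact hmach j j' hne (hj.2.trans hj'.2.symm)
  -- total work
  have htot : ∑ j, p j = 2 * ((2 * t + 3) * b) := by
    rw [hp, Fintype.sum_sum_type, Fintype.sum_sum_type]
    simp only [Sum.elim_inl, Sum.elim_inr, hsum, Finset.sum_const, Finset.card_univ,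
      Fintype.card_fin, smul_eq_mul]
    ring
  have hfilter1 : ∀ (α : Type) (inst : Fintype α) (f : α → Fin 2),
      (Finset.univ.filter fun i => f i = 1) = (Finset.univ.filter fun i => ¬ f i = 0) := by
    intro α inst f
    apply Finset.filter_congr
    intro i _
    simp [h01]
  have hsplit : (∑ j ∈ Finset.univ.filter (fun j => M j = 0), p j) +
      (∑ j ∈ Finset.univ.filter (fun j => M j = 1), p j) = ∑ j, p j := by
    rw [hfilter1 _ _ M]
    exact Finset.sum_filter_add_sum_filter_not _ _ _
  -- hence each load is exactly T
  have hLeq : ∀ m' : Fin 2,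
      ∑ j ∈ Finset.univ.filter (fun j => M j = m'), p j = (2 * t + 3) * b := by
    have h0 := hload 0
    have h1 := hload 1
    rw [htot] at hsplit
    intro m'
    rcases h2cases m' with rfl | rfl <;> omega
  -- decompose each load into short and long contributions
  have hdec : ∀ m' : Fin 2,
      (∑ i ∈ Finset.univ.filter (fun i : Fin t => M (Sum.inl i) = m'), a i) +
      2 * b * ((Finset.univ.filter (fun i : Fin (t + 1) => M (Sum.inr (Sum.inl i)) = m')).card +
        (Finset.univ.filter (fun i : Fin (t + 1) => M (Sum.inr (Sum.inr i)) = m')).card)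
      = (2 * t + 3) * b := by
    intro m'
    have h1 : ∑ j ∈ Finset.univ.filter (fun j => M j = m'), p j
        = (∑ i : Fin t, if M (Sum.inl i) = m' then a i else 0)
        + ((∑ i : Fin (t + 1), if M (Sum.inr (Sum.inl i)) = m' then 2 * b else 0)
        + (∑ i : Fin (t + 1), if M (Sum.inr (Sum.inr i)) = m' then 2 * b else 0)) := by
      rw [Finset.sum_filter, hp, Fintype.sum_sum_type, Fintype.sum_sum_type]
      simp only [Sum.elim_inl, Sum.elim_inr]
    have h2 : (∑ i : Fin t, if M (Sum.inl i) = m' then a i else 0)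
        = ∑ i ∈ Finset.univ.filter (fun i : Fin t => M (Sum.inl i) = m'), a i :=
      (Finset.sum_filter _ _).symm
    have h3 : (∑ i : Fin (t + 1), if M (Sum.inr (Sum.inl i)) = m' then 2 * b else 0)
        = (Finset.univ.filter (fun i : Fin (t + 1) => M (Sum.inr (Sum.inl i)) = m')).card
          * (2 * b) := by
      rw [← Finset.sum_filter, Finset.sum_const, smul_eq_mul]
    have h4 : (∑ i : Fin (t + 1), if M (Sum.inr (Sum.inr i)) = m' then 2 * b else 0)
        = (Finset.univ.filter (fun i : Fin (t + 1) => M (Sum.inr (Sum.inr i)) = m')).card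
          * (2 * b) := by
      rw [← Finset.sum_filter, Finset.sum_const, smul_eq_mul]
    have h5 := hLeq m'
    rw [h1, h2, h3, h4] at h5
    rw [← h5]
    ring
  -- counts and short sums across the two machines
  have hcount : ∀ (f : Fin (t + 1) → Fin 2),
      (Finset.univ.filter fun i => f i = 0).card +
      (Finset.univ.filter fun i => f i = 1).card = t + 1 := by
    intro f
    rw [hfilter1 _ _ f, Finset.card_filter_add_card_filter_not, Finset.card_univ,
      Fintype.card_fin]
  have hshort : (∑ i ∈ Finset.univ.filter (fun i : Fin t => M (Sum.inl i) = 0), a i) +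
      (∑ i ∈ Finset.univ.filter (fun i : Fin t => M (Sum.inl i) = 1), a i) = 2 * b := by
    rw [hfilter1 _ _ (fun i => M (Sum.inl i)), Finset.sum_filter_add_sum_filter_not, hsum]
  have e0 := hdec 0
  have e1 := hdec 1
  have hc1 := hcount (fun i => M (Sum.inr (Sum.inl i)))
  have hc2 := hcount (fun i => M (Sum.inr (Sum.inr i)))
  -- arithmetic finish
  have hKle : ∀ S K : ℕ, S + 2 * b * K = (2 * t + 3) * b → K ≤ t + 1 := by
    intro S K h
    have h1 : 2 * b * K ≤ (2 * t + 3) * b := by omega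
    have h2 : (2 * K) * b ≤ (2 * t + 3) * b := by
      calc (2 * K) * b = 2 * b * K := by ring
        _ ≤ _ := h1
    have h3 : 2 * K ≤ 2 * t + 3 := Nat.le_of_mul_le_mul_right h2 hb
    omega
  set S0 := ∑ i ∈ Finset.univ.filter (fun i : Fin t => M (Sum.inl i) = 0), a i with hS0
  set S1 := ∑ i ∈ Finset.univ.filter (fun i : Fin t => M (Sum.inl i) = 1), a i with hS1
  set k10 := (Finset.univ.filter (fun i : Fin (t + 1) => M (Sum.inr (Sum.inl i)) = 0)).card
  set k11 := (Finset.univ.filter (fun i : Fin (t + 1) => M (Sum.inr (Sum.inl i)) = 1)).card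
  set k20 := (Finset.univ.filter (fun i : Fin (t + 1) => M (Sum.inr (Sum.inr i)) = 0)).card
  set k21 := (Finset.univ.filter (fun i : Fin (t + 1) => M (Sum.inr (Sum.inr i)) = 1)).card
  have hK0 := hKle _ _ e0
  have hK1 := hKle _ _ e1
  have hKeq0 : k10 + k20 = t + 1 := by omega
  have hKeq1 : k11 + k21 = t + 1 := by omega
  have hr : (2 * t + 3) * b = 2 * b * (t + 1) + b := by ring
  have hSb0 : S0 = b := by rw [hKeq0, hr] at e0; omega
  have hSb1 : S1 = b := by rw [hKeq1, hr] at e1; omega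
  intro m
  rcases h2cases m with rfl | rfl
  · exact ⟨hKeq0, hSb0⟩
  · exact ⟨hKeq1, hSb1⟩
end

section
/- Let t ∈ s1 ⧢ ⋯ ⧢ sk be words over a binary alphabet where t has the same multiset of letters as the concatenation of s1,...,sk. For each i, define y_i(x) as the position of the block of t into which the last letter of the x-th block of s_i is mapped, and δ_i(x) = y_i(x) - x. Then each δ_i is non-decreasing, δ_i(x) ≥ 0 for all x, and δ_i(x) ≤ B_t - B_i where B_t is the number of blocks of t and B_i the number of blocks of s_i... in particular if all s_i have B blocks and t has B + c blocks, then 0 ≤ δ_i(x) ≤ c for all x. -/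
/-- `blockIdx w p` is the index (counted from `1`) of the maximal block of equal
letters of `w` containing position `p` (positions counted from `0`). -/
def blockIdx {α : Type*} [DecidableEq α] (w : List α) (p : ℕ) : ℕ :=
  1 + ((List.range p).filter (fun j => decide (w[j]? ≠ w[j + 1]?))).length

/-- `numBlocks w` is the number of maximal blocks of equal letters of `w`. -/
def numBlocks {α : Type*} [DecidableEq α] (w : List α) : ℕ :=
  if w = [] then 0 else blockIdx w (w.length - 1)

/-- `lastPos w x` is the position (counted from `0`) of the last letter of the
`x`-th block of `w`. -/
def lastPos {α : Type*} [DecidableEq α] (w : List α) (x : ℕ) : ℕ :=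
  ((Finset.range w.length).filter (fun p => blockIdx w p = x)).sup id

lemma blockIdx_mono {α : Type*} [DecidableEq α] (w : List α) : Monotone (blockIdx w) := by
  intro p q hpq
  unfold blockIdx
  have h : (List.range p).Sublist (List.range q) := List.range_sublist.mpr hpq
  exact Nat.add_le_add_left ((h.filter _).length_le) 1
lemma blockIdx_succ {α : Type*} [DecidableEq α] (w : List α) (p : ℕ) :
    blockIdx w (p + 1) = blockIdx w p + (if w[p]? = w[p+1]? then 0 else 1) := by
  unfold blockIdx
  rw [List.range_succ, List.filter_append, List.length_append, List.filter_singleton]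
  by_cases h : w[p]? = w[p+1]? <;> simp [h] <;> omega
lemma blockIdx_eq_imp_get_eq {α : Type*} [DecidableEq α] (w : List α) (p d : ℕ)
    (h : blockIdx w p = blockIdx w (p + d)) : w[p]? = w[p + d]? := by
  induction d with
  | zero => rfl
  | succ d ih =>
    have h1 : blockIdx w p ≤ blockIdx w (p + d) := blockIdx_mono w (Nat.le_add_right p d)
    have h2 := blockIdx_succ w (p + d)
    rw [show p + (d+1) = (p + d) + 1 from rfl] at h ⊢
    by_cases he : w[p+d]? = w[p+d+1]?
    · simp only [he, if_pos] at h2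
      rw [ih (by omega), he]
    · simp only [he, if_neg, not_false_iff] at h2; omega
lemma blockIdx_lt_of_get_ne {α : Type*} [DecidableEq α] (w : List α) (p q : ℕ)
    (hpq : p ≤ q) (hne : w[p]? ≠ w[q]?) : blockIdx w p < blockIdx w q := by
  rcases Nat.lt_or_ge (blockIdx w p) (blockIdx w q) with h | h
  · exact h
  · exfalso
    obtain ⟨d, rfl⟩ := Nat.exists_eq_add_of_le hpq
    exact hne (blockIdx_eq_imp_get_eq w p d (le_antisymm (blockIdx_mono w (Nat.le_add_right p d)) h))
lemma blockIdx_zero {α : Type*} [DecidableEq α] (w : List α) : blockIdx w 0 = 1 := by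
  simp [blockIdx]
lemma one_le_blockIdx {α : Type*} [DecidableEq α] (w : List α) (p : ℕ) : 1 ≤ blockIdx w p :=
  Nat.le_add_right 1 _
lemma exists_blockIdx_eq {α : Type*} [DecidableEq α] (w : List α) (m x : ℕ)
    (h1 : 1 ≤ x) (h2 : x ≤ blockIdx w m) : ∃ p ≤ m, blockIdx w p = x := by
  induction m with
  | zero => exact ⟨0, le_refl 0, by rw [blockIdx_zero] at h2 ⊢; omega⟩
  | succ m ih =>
    rcases le_or_gt x (blockIdx w m) with h | h
    · obtain ⟨p, hp, hpx⟩ := ih h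
      exact ⟨p, hp.trans (Nat.le_succ m), hpx⟩
    · have := blockIdx_succ w m
      refine ⟨m + 1, le_refl _, ?_⟩
      by_cases he : w[m]? = w[m+1]?
      · simp only [he, if_pos] at this; omega
      · simp only [he, if_neg, not_false_iff] at this; omega
lemma sup_id_mem (S : Finset ℕ) (h : S.Nonempty) : S.sup id ∈ S := by
  rw [← Finset.sup'_eq_sup h id]
  exact Finset.sup'_mem (↑S : Set ℕ)
    (fun x hx y hy => by rcases le_total x y with h' | h' <;>
      simp [max_eq_right, max_eq_left, h', hx, hy]) S h id (fun i hi => hi)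
lemma lastPos_spec {α : Type*} [DecidableEq α] (w : List α) (x : ℕ)
    (hne : ∃ p, p < w.length ∧ blockIdx w p = x) :
    lastPos w x < w.length ∧ blockIdx w (lastPos w x) = x := by
  obtain ⟨p, hp, hpx⟩ := hne
  have hS : ((Finset.range w.length).filter (fun p => blockIdx w p = x)).Nonempty :=
    ⟨p, by simp [Finset.mem_filter, hp, hpx]⟩
  have := sup_id_mem _ hS
  simp only [Finset.mem_filter, Finset.mem_range] at this
  exact ⟨this.1, this.2⟩
lemma key_ineq {k : ℕ} (s : Fin k → List Bool) (t : List Bool) (f : Fin k → ℕ → ℕ)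
    (hmono : ∀ i, StrictMonoOn (f i) (Set.Iio (s i).length))
    (hletter : ∀ i p, p < (s i).length → t[f i p]? = (s i)[p]?)
    (i : Fin k) (p q : ℕ) (hpq : p ≤ q) (h : q < (s i).length) :
    blockIdx (s i) q + blockIdx t (f i p) ≤ blockIdx t (f i q) + blockIdx (s i) p := by
  obtain ⟨d, rfl⟩ := Nat.exists_eq_add_of_le hpq
  clear hpq
  induction d with
  | zero => simp [Nat.add_comm]
  | succ d ih =>
    have hpd : p + d < (s i).length := by omega
    have ih' := ih hpd
    have hs := blockIdx_succ (s i) (p + d)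
    rw [show p + (d+1) = (p+d)+1 from rfl] at h ⊢
    have hflt : f i (p+d) < f i (p+d+1) :=
      hmono i (Set.mem_Iio.mpr hpd) (Set.mem_Iio.mpr (by omega : p+d+1 < (s i).length))
        (Nat.lt_succ_self _)
    by_cases he : (s i)[p+d]? = (s i)[p+d+1]?
    · have hmt : blockIdx t (f i (p+d)) ≤ blockIdx t (f i (p+d+1)) :=
        blockIdx_mono t (le_of_lt hflt)
      simp only [he, if_pos] at hs; omega
    · have hne : t[f i (p+d)]? ≠ t[f i (p+d+1)]? := by
        rw [hletter i _ hpd, hletter i _ (by omega : p+d+1 < (s i).length)]; exact he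
      have hlt : blockIdx t (f i (p+d)) < blockIdx t (f i (p+d+1)) :=
        blockIdx_lt_of_get_ne t _ _ (le_of_lt hflt) hne
      simp only [he, if_neg, not_false_iff] at hs; omega

/-- Let `t ∈ s_1 ⧢ ⋯ ⧢ s_k` over a binary alphabet, witnessed by strictly
increasing letter-preserving position maps `f i` with pairwise disjoint images
covering `t`.  Suppose each `s i` has `B` blocks and `t` has `B + c` blocks.
For the `x`-th block of `s i`, let `y i x` be the index of the block of `t`
receiving its last letter and `δ i x = y i x - x`.  Then each `δ i` is
non-decreasing and `0 ≤ δ i x ≤ c`. -/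
theorem shuffle_block_shift (k B c : ℕ) (hB : 1 ≤ B)
    (s : Fin k → List Bool) (t : List Bool) (f : Fin k → ℕ → ℕ)
    (hmono : ∀ i, StrictMonoOn (f i) (Set.Iio (s i).length))
    (hrange : ∀ i p, p < (s i).length → f i p < t.length)
    (hletter : ∀ i p, p < (s i).length → t[f i p]? = (s i)[p]?)
    (hdisj : ∀ i j p q, p < (s i).length → q < (s j).length →
      f i p = f j q → i = j ∧ p = q)
    (hcover : ∀ r < t.length, ∃ i p, p < (s i).length ∧ f i p = r)
    (hBs : ∀ i, numBlocks (s i) = B) (hBt : numBlocks t = B + c) :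
    ∀ i : Fin k, ∀ x, 1 ≤ x → x ≤ B →
      (x : ℤ) ≤ (blockIdx t (f i (lastPos (s i) x)) : ℤ) ∧
      (blockIdx t (f i (lastPos (s i) x)) : ℤ) - x ≤ c ∧
      ∀ x', x ≤ x' → x' ≤ B →
        (blockIdx t (f i (lastPos (s i) x)) : ℤ) - x ≤
          (blockIdx t (f i (lastPos (s i) x')) : ℤ) - x' := by
  intro i x hx1 hxB
  -- s i is nonempty
  have hsne : s i ≠ [] := by
    intro he
    have := hBs i
    rw [he] at this
    simp [numBlocks] at this
    omega
  have hslen : 1 ≤ (s i).length := List.length_pos_iff.mpr hsne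
  have hsB : blockIdx (s i) ((s i).length - 1) = B := by
    have := hBs i
    rwa [numBlocks, if_neg hsne] at this
  -- general lastPos facts
  have lastPosFact : ∀ z, 1 ≤ z → z ≤ B →
      lastPos (s i) z < (s i).length ∧ blockIdx (s i) (lastPos (s i) z) = z := by
    intro z hz1 hzB
    apply lastPos_spec
    obtain ⟨p, hp, hpz⟩ := exists_blockIdx_eq (s i) ((s i).length - 1) z hz1 (by omega)
    exact ⟨p, by omega, hpz⟩
  obtain ⟨hP, hPx⟩ := lastPosFact x hx1 hxB
  -- t is nonempty
  have htne : t ≠ [] := by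
    intro he
    have := hrange i (lastPos (s i) x) hP
    rw [he] at this
    simp at this
  have htlen : 1 ≤ t.length := List.length_pos_iff.mpr htne
  have htB : blockIdx t (t.length - 1) = B + c := by rwa [numBlocks, if_neg htne] at hBt
  -- lower bound
  have h1 : blockIdx (s i) (lastPos (s i) x) + blockIdx t (f i 0) ≤
      blockIdx t (f i (lastPos (s i) x)) + blockIdx (s i) 0 :=
    key_ineq s t f hmono hletter i 0 _ (Nat.zero_le _) hP
  have h1' := one_le_blockIdx t (f i 0)
  have h10 := blockIdx_zero (s i)
  -- upper bound
  have h2 : blockIdx (s i) ((s i).length - 1) + blockIdx t (f i (lastPos (s i) x)) ≤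
      blockIdx t (f i ((s i).length - 1)) + blockIdx (s i) (lastPos (s i) x) :=
    key_ineq s t f hmono hletter i _ _ (by omega) (by omega)
  have h2' : blockIdx t (f i ((s i).length - 1)) ≤ B + c := by
    rw [← htB]
    exact blockIdx_mono t (by have := hrange i ((s i).length - 1) (by omega); omega)
  refine ⟨by omega, by omega, ?_⟩
  -- monotonicity
  intro x' hxx' hx'B
  obtain ⟨hP', hP'x⟩ := lastPosFact x' (by omega) hx'B
  rcases le_or_gt (lastPos (s i) x) (lastPos (s i) x') with hPP | hPP
  · have h3 : blockIdx (s i) (lastPos (s i) x') + blockIdx t (f i (lastPos (s i) x)) ≤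
        blockIdx t (f i (lastPos (s i) x')) + blockIdx (s i) (lastPos (s i) x) :=
      key_ineq s t f hmono hletter i _ _ hPP hP'
    omega
  · have h4 : blockIdx (s i) (lastPos (s i) x') ≤ blockIdx (s i) (lastPos (s i) x) :=
      blockIdx_mono (s i) (le_of_lt hPP)
    have hxx : x = x' := by omega
    rw [hxx] at hPP
    omega
end

section
/- Consider jobs scheduled on two machines with makespan T = Σ_{x=1}^{|t|}(t[x]+1), where for each x ∈ [1,|t|] there are three floor jobs z_{x,1}, z_{x,2}, z_{x,3} with z_{x,1} ≺ z_{x,2}, z_{x,1} ≺ z_{x,3}, z_{x,2} ≺ z_{x+1,1}, z_{x,3} ≺ z_{x+1,1} (when x < |t|), processing times p(z_{x,1}) = t[x] ∈ {1,2} and p(z_{x,2}) = p(z_{x,3}) = 1. Then in any feasible two-machine schedule with makespan T, job z_{x,1} starts at time τ(x) := Σ_{y=1}^{x-1}(t[y]+1), and jobs z_{x,2}, z_{x,3} both start at time τ(x) + t[x]. -/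
/-- In any feasible two-machine schedule of the floor jobs with makespan
`T = Σ_{x<m}(t[x]+1)`, the job `z_{x,1}` starts at time `τ(x) = Σ_{y<x}(t[y]+1)` and
the jobs `z_{x,2}`, `z_{x,3}` both start at time `τ(x) + t[x]`.  Floor job `x j`
(with `x < m`, `j < 3`) is `z_{x+1, j+1}` of the paper. -/
theorem floor_jobs_start_times (m : ℕ) (hm : 1 ≤ m)
    (t : ℕ → ℕ) (ht : ∀ x < m, t x = 1 ∨ t x = 2)
    (p : ℕ → ℕ → ℕ) (hp : ∀ x < m, p x 0 = t x ∧ p x 1 = 1 ∧ p x 2 = 1)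
    (s : ℕ → ℕ → ℕ)
    -- precedence constraints `z_{x,1} ≺ z_{x,2}` and `z_{x,1} ≺ z_{x,3}`
    (hprec1 : ∀ x < m, s x 0 + t x ≤ s x 1 ∧ s x 0 + t x ≤ s x 2)
    -- precedence constraints `z_{x,2} ≺ z_{x+1,1}` and `z_{x,3} ≺ z_{x+1,1}`
    (hprec2 : ∀ x, x + 1 < m → s x 1 + 1 ≤ s (x + 1) 0 ∧ s x 2 + 1 ≤ s (x + 1) 0)
    -- at any time at most two jobs are running (two machines)
    (hconc : ∀ τ : ℕ,
      ((Finset.range m ×ˢ Finset.range 3).filter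
        (fun j => s j.1 j.2 ≤ τ ∧ τ < s j.1 j.2 + p j.1 j.2)).card ≤ 2)
    -- the makespan is `T`
    (hmak : (Finset.range m ×ˢ Finset.range 3).sup (fun j => s j.1 j.2 + p j.1 j.2)
        = ∑ y ∈ Finset.range m, (t y + 1)) :
    ∀ x < m, s x 0 = ∑ y ∈ Finset.range x, (t y + 1) ∧
      s x 1 = (∑ y ∈ Finset.range x, (t y + 1)) + t x ∧
      s x 2 = (∑ y ∈ Finset.range x, (t y + 1)) + t x := by
  set τ : ℕ → ℕ := fun x => ∑ y ∈ Finset.range x, (t y + 1) with hτ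
  have hτsucc : ∀ x, τ (x + 1) = τ x + (t x + 1) := by
    intro x; simp [hτ, Finset.sum_range_succ]
  -- every job finishes by time τ m
  have hsup : ∀ x < m, ∀ j < 3, s x j + p x j ≤ τ m := by
    intro x hx j hj
    have hτm : τ m = ∑ y ∈ Finset.range m, (t y + 1) := rfl
    rw [hτm, ← hmak]
    exact Finset.le_sup (f := fun j => s j.1 j.2 + p j.1 j.2) (b := (x, j)) (Finset.mem_product.mpr ⟨Finset.mem_range.mpr hx, Finset.mem_range.mpr hj⟩)
  -- lower bound by induction
  have hlow : ∀ x, x < m → τ x ≤ s x 0 := by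
    intro x
    induction x with
    | zero => intro _; simp [hτ]
    | succ n ih =>
      intro h
      have hn : n < m := by omega
      have h1 := (hprec1 n hn).1
      have h2 := (hprec2 n h).1
      have h3 := ih hn
      have h4 := hτsucc n
      omega
  -- upper bound by downward induction
  have hup : ∀ d x, x + d + 1 = m → s x 0 + t x + 1 ≤ τ (x + 1) := by
    intro d
    induction d with
    | zero =>
      intro x hx
      have hxm : x < m := by omega
      have h1 := (hprec1 x hxm).1
      have h2 := hsup x hxm 1 (by omega)
      have h3 := (hp x hxm).2.1
      have h4 : τ (x+1) = τ m := by rw [show x+1 = m by omega]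
      omega
    | succ d ih =>
      intro x hx
      have hxm : x < m := by omega
      have h0 := ih (x + 1) (by omega)
      have h1 := (hprec1 x hxm).1
      have h2 := (hprec2 x (by omega)).1
      have h4 := hτsucc (x + 1)
      omega
  have hs0 : ∀ x < m, s x 0 = τ x := by
    intro x hx
    have h1 := hlow x hx
    have h2 := hup (m - x - 1) x (by omega)
    have h3 := hτsucc x
    omega
  intro x hx
  have h0 := hs0 x hx
  have h1 := (hprec1 x hx).1
  have h2 := (hprec1 x hx).2
  have hub : s x 1 + 1 ≤ τ (x + 1) ∧ s x 2 + 1 ≤ τ (x + 1) := by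
    by_cases h : x + 1 < m
    · have h3 := (hprec2 x h).1
      have h4 := (hprec2 x h).2
      have h5 := hs0 (x + 1) h
      omega
    · have hx1 : x + 1 = m := by omega
      have h7 : τ (x + 1) = τ m := by rw [hx1]
      have h3 := hsup x hx 1 (by omega)
      have h4 := hsup x hx 2 (by omega)
      have h5 := (hp x hx).2.1
      have h6 := (hp x hx).2.2
      omega
  have h3 := hτsucc x
  have h4 : τ x = ∑ y ∈ Finset.range x, (t y + 1) := rfl
  exact ⟨by omega, by omega, by omega⟩
end

section
/- The jobs created by the floor-job construction decompose into exactly two chains under the precedence relation, namely {z_{x,1}, z_{x,2} : 1 ≤ x ≤ n} and {z_{x,1}, z_{x,3} : 1 ≤ x ≤ n}; hence the width of the precedence partial order on all floor jobs is 2 (for n ≥ 1). -/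
/-- The generating precedences among floor jobs `(x, j)` with `x < n`, `j < 3`
(`(x,0)` is `z_{x+1,1}`, `(x,1)` is `z_{x+1,2}`, `(x,2)` is `z_{x+1,3}`):
`z_{x,1} ≺ z_{x,2}`, `z_{x,1} ≺ z_{x,3}`, and for `x < n`,
`z_{x,2} ≺ z_{x+1,1}` and `z_{x,3} ≺ z_{x+1,1}`. -/
def floorGen (n : ℕ) : (ℕ × Fin 3) → (ℕ × Fin 3) → Prop := fun a b =>
  (a.1 = b.1 ∧ b.1 < n ∧ a.2 = 0 ∧ (b.2 = 1 ∨ b.2 = 2)) ∨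
  (a.1 + 1 = b.1 ∧ b.1 < n ∧ (a.2 = 1 ∨ a.2 = 2) ∧ b.2 = 0)
namespace FloorAux

def m (a : ℕ × Fin 3) : ℕ := 3 * a.1 + (if a.2 = 0 then 0 else 1)

lemma step_mono {n : ℕ} {a b : ℕ × Fin 3} (h : floorGen n a b) : m a < m b := by
  obtain ⟨h1, _, h2, h3⟩ | ⟨h1, _, h2, h3⟩ := h
  · rcases h3 with h3 | h3 <;> simp [m, h1, h2, h3] <;> omega
  · rcases h2 with h2 | h2 <;> simp [m, ← h1, h2, h3] <;> omega

lemma reach_mono {n : ℕ} {a b : ℕ × Fin 3}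
    (h : Relation.ReflTransGen (floorGen n) a b) : m a ≤ m b := by
  induction h with
  | refl => exact le_refl _
  | tail _ hs ih => exact ih.trans (step_mono hs).le

lemma reach_lt {n : ℕ} {a b : ℕ × Fin 3} (hne : a ≠ b)
    (h : Relation.ReflTransGen (floorGen n) a b) : m a < m b := by
  rcases h.cases_head with rfl | ⟨c, hc, hcb⟩
  · exact absurd rfl hne
  · exact lt_of_lt_of_le (step_mono hc) (reach_mono hcb)

lemma reach01 {n : ℕ} (x : ℕ) (hx : x < n) {j : Fin 3} (hj : j = 1 ∨ j = 2) :
    Relation.ReflTransGen (floorGen n) (x, 0) (x, j) :=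
  Relation.ReflTransGen.single (Or.inl ⟨rfl, hx, rfl, hj⟩)

lemma reach0 {n : ℕ} (x : ℕ) : ∀ k : ℕ, x + k < n →
    Relation.ReflTransGen (floorGen n) (x, 0) (x + k, 0) := by
  intro k
  induction k with
  | zero => intro _; exact .refl
  | succ k ih =>
    intro h
    have h1 : x + k < n := by omega
    exact ((ih (by omega)).tail
        (show floorGen n (x + k, 0) (x + k, 1) from Or.inl ⟨rfl, h1, rfl, Or.inl rfl⟩)).tail
        (show floorGen n (x + k, 1) (x + k + 1, 0) from Or.inr ⟨rfl, by omega, Or.inl rfl, rfl⟩)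

lemma reach_of_lt {n : ℕ} {a b : ℕ × Fin 3} (hab : a.1 < b.1) (hb : b.1 < n) :
    Relation.ReflTransGen (floorGen n) a b := by
  obtain ⟨x, j⟩ := a
  obtain ⟨y, i⟩ := b
  simp only at hab hb
  have h1 : Relation.ReflTransGen (floorGen n) (x, j) (x + 1, 0) := by
    have hx1 : x + 1 < n := by omega
    fin_cases j
    · exact (Relation.ReflTransGen.single
          (show floorGen n (x, 0) (x, 1) from Or.inl ⟨rfl, by omega, rfl, Or.inl rfl⟩)).tail
          (show floorGen n (x, 1) (x + 1, 0) from Or.inr ⟨rfl, hx1, Or.inl rfl, rfl⟩)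
    · exact .single (Or.inr ⟨rfl, hx1, Or.inl rfl, rfl⟩)
    · exact .single (Or.inr ⟨rfl, hx1, Or.inr rfl, rfl⟩)
  have h2 : Relation.ReflTransGen (floorGen n) (x + 1, 0) (y, 0) := by
    have := reach0 (n := n) (x + 1) (y - (x + 1)) (by omega)
    have hy : x + 1 + (y - (x + 1)) = y := by omega
    rwa [hy] at this
  refine (h1.trans h2).trans ?_
  fin_cases i
  · exact .refl
  · exact reach01 y hb (Or.inl rfl)
  · exact reach01 y hb (Or.inr rfl)

lemma chain_lemma {n : ℕ} {j : Fin 3} (hj : j = 1 ∨ j = 2) :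
    ∀ a b : ℕ × Fin 3, a.1 < n → b.1 < n → (a.2 = 0 ∨ a.2 = j) → (b.2 = 0 ∨ b.2 = j) →
      Relation.ReflTransGen (floorGen n) a b ∨ Relation.ReflTransGen (floorGen n) b a := by
  intro a b ha hb ha2 hb2
  rcases lt_trichotomy a.1 b.1 with h | h | h
  · exact Or.inl (reach_of_lt h hb)
  · by_cases he : a.2 = b.2
    · left; rw [show a = b from Prod.ext h he]
    · rcases ha2 with ha2 | ha2
      · left
        have hb2' : b.2 = j := by
          rcases hb2 with h' | h'
          · exact absurd (ha2.trans h'.symm) he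
          · exact h'
        have : b = (a.1, j) := Prod.ext h.symm hb2'
        rw [this, show a = (a.1, (0 : Fin 3)) from Prod.ext rfl ha2]
        exact reach01 a.1 ha hj
      · right
        have hb2' : b.2 = 0 := by
          rcases hb2 with h'' | h''
          · exact h''
          · exact absurd (ha2.trans h''.symm) he
        have : a = (b.1, j) := Prod.ext h ha2
        rw [this, show b = (b.1, (0 : Fin 3)) from Prod.ext rfl hb2']
        exact reach01 b.1 hb hj
  · exact Or.inr (reach_of_lt h ha)

end FloorAux
/-- The floor jobs decompose into exactly two chains under the precedence relation
(the reflexive-transitive closure of `floorGen`), namely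
`{z_{x,1}, z_{x,2}}` and `{z_{x,1}, z_{x,3}}`; hence the width of the precedence
partial order is `2` when `n ≥ 1`. -/
theorem floor_jobs_width_two (n : ℕ) (hn : 1 ≤ n) :
    -- the first set is a chain
    (∀ a b : ℕ × Fin 3, a.1 < n → b.1 < n → (a.2 = 0 ∨ a.2 = 1) → (b.2 = 0 ∨ b.2 = 1) →
      Relation.ReflTransGen (floorGen n) a b ∨ Relation.ReflTransGen (floorGen n) b a) ∧
    -- the second set is a chain
    (∀ a b : ℕ × Fin 3, a.1 < n → b.1 < n → (a.2 = 0 ∨ a.2 = 2) → (b.2 = 0 ∨ b.2 = 2) →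
      Relation.ReflTransGen (floorGen n) a b ∨ Relation.ReflTransGen (floorGen n) b a) ∧
    -- the two chains cover all floor jobs
    (∀ a : ℕ × Fin 3, a.1 < n → (a.2 = 0 ∨ a.2 = 1) ∨ (a.2 = 0 ∨ a.2 = 2)) ∧
    -- every antichain has size at most 2
    (∀ S : Finset (ℕ × Fin 3), (∀ a ∈ S, a.1 < n) →
      (∀ a ∈ S, ∀ b ∈ S, a ≠ b →
        ¬ Relation.ReflTransGen (floorGen n) a b ∧
        ¬ Relation.ReflTransGen (floorGen n) b a) →
      S.card ≤ 2) ∧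
    -- there is an antichain of size 2
    (∃ S : Finset (ℕ × Fin 3), (∀ a ∈ S, a.1 < n) ∧
      (∀ a ∈ S, ∀ b ∈ S, a ≠ b →
        ¬ Relation.ReflTransGen (floorGen n) a b ∧
        ¬ Relation.ReflTransGen (floorGen n) b a) ∧
      S.card = 2) := by
  open FloorAux in
  refine ⟨chain_lemma (Or.inl rfl), chain_lemma (Or.inr rfl), ?_, ?_, ?_⟩
  · rintro ⟨x, j⟩ _
    fin_cases j <;> simp
  · intro S hS hA
    have key : ∀ a ∈ S, ∀ b ∈ S, a ≠ b → a.1 = b.1 ∧ a.2 ≠ 0 := by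
      intro a ha b hb hne
      obtain ⟨h1, h2⟩ := hA a ha b hb hne
      have hfloor : a.1 = b.1 := by
        rcases lt_trichotomy a.1 b.1 with h | h | h
        · exact absurd (reach_of_lt h (hS b hb)) h1
        · exact h
        · exact absurd (reach_of_lt h (hS a ha)) h2
      refine ⟨hfloor, fun h0 => ?_⟩
      have hne0 : b.2 ≠ 0 := by
        intro hb0
        exact hne (Prod.ext hfloor (h0.trans hb0.symm))
      have hb2 : b.2 = 1 ∨ b.2 = 2 := by
        have hv : b.2.val ≠ 0 := fun h => hne0 (Fin.ext h)
        have hlt : b.2.val < 3 := b.2.isLt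
        have : b.2.val = 1 ∨ b.2.val = 2 := by omega
        rcases this with h' | h'
        · exact Or.inl (Fin.ext h')
        · exact Or.inr (Fin.ext h')
      have : Relation.ReflTransGen (floorGen n) a b := by
        rw [show a = (a.1, (0:Fin 3)) from Prod.ext rfl h0,
          show b = (a.1, b.2) from Prod.ext hfloor.symm rfl]
        exact reach01 a.1 (hfloor ▸ hS b hb) hb2
      exact h1 this
    by_contra hcard
    push_neg at hcard
    obtain ⟨a, ha, b, hb, c, hc, hab, hac, hbc⟩ := Finset.two_lt_card.mp hcard
    obtain ⟨e1, n1⟩ := key a ha b hb hab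
    obtain ⟨e2, n2⟩ := key a ha c hc hac
    obtain ⟨_, nb⟩ := key b hb a ha hab.symm
    obtain ⟨_, nc⟩ := key c hc a ha hac.symm
    have e3 : b.1 = c.1 := e1.symm.trans e2
    have d1 : a.2.val ≠ b.2.val := fun h => hab (Prod.ext e1 (Fin.ext h))
    have d2 : a.2.val ≠ c.2.val := fun h => hac (Prod.ext e2 (Fin.ext h))
    have d3 : b.2.val ≠ c.2.val := fun h => hbc (Prod.ext e3 (Fin.ext h))
    have v1 : a.2.val < 3 := a.2.isLt
    have v2 : b.2.val < 3 := b.2.isLt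
    have v3 : c.2.val < 3 := c.2.isLt
    have n1' : a.2.val ≠ 0 := fun h => n1 (Fin.ext h)
    have n2' : b.2.val ≠ 0 := fun h => nb (Fin.ext h)
    have n3' : c.2.val ≠ 0 := fun h => nc (Fin.ext h)
    omega
  · refine ⟨{(0, 1), (0, 2)}, ?_, ?_, ?_⟩
    · intro a ha
      simp only [Finset.mem_insert, Finset.mem_singleton] at ha
      rcases ha with rfl | rfl <;> exact Nat.lt_of_lt_of_le Nat.zero_lt_one hn
    · intro a ha b hb hne
      simp only [Finset.mem_insert, Finset.mem_singleton] at ha hb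
      have hm : m a = m b := by
        rcases ha with rfl | rfl <;> rcases hb with rfl | rfl <;> rfl
      constructor <;> intro h
      · exact absurd (reach_lt hne h) (by omega)
      · exact absurd (reach_lt (Ne.symm hne) h) (by omega)
    · decide
end
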